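/- arXiv:2108.02910 — 11 statements merged into one kernel-verified Lean document; each statement's English description precedes it below -/
import Mathlib

section
/- Let θ ∈ (1/2, 1] and suppose every adjacent step ratio satisfies 0 < r_k ≤ r_p := (2 + 2√(2θ))/(2θ − 1) for 2 ≤ k ≤ n. Then for every real sequence w_1, …, w_n one has ∑_{k=1}^n w_k ∑_{j=1}^k b_{k−j}^{(k)} w_j ≥ 0, i.e., the WSBDF2 convolution kernels are positive semi-definite. -/
open Finset

/-- Adjacent time-step ratios `r_k = τ_k / τ_{k-1}`. -/
noncomputable def rr (τ : ℕ → ℝ) (k : ℕ) : ℝ := τ k / τ (k - 1)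

/-- The WSBDF2 convolution kernels `b_j^{(n)}`:
`b_0^{(1)} = 1/τ_1`, and for `n ≥ 2`,
`b_0^{(n)} = (1 + 2θ r_n)/(τ_n (1 + r_n))`, `b_1^{(n)} = (1 - 2θ) r_n² /(τ_n (1 + r_n))`,
all other kernels vanish. -/
noncomputable def bk (θ : ℝ) (τ : ℕ → ℝ) (n j : ℕ) : ℝ :=
  if n = 1 then (if j = 0 then 1 / τ 1 else 0)
  else if j = 0 then (1 + 2 * θ * rr τ n) / (τ n * (1 + rr τ n))
  else if j = 1 then (1 - 2 * θ) * (rr τ n) ^ 2 / (τ n * (1 + rr τ n))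
  else 0

/-- The DOC (discrete orthogonal convolution) kernels: `dk θ τ n m` is `d_m^{(n)}`,
defined by `d_0^{(n)} = 1/b_0^{(n)}` and
`d_{n-k}^{(n)} = -(b_1^{(k+1)}/b_0^{(k)}) d_{n-k-1}^{(n)}` for `1 ≤ k ≤ n-1`. -/
noncomputable def dk (θ : ℝ) (τ : ℕ → ℝ) (n : ℕ) : ℕ → ℝ
  | 0 => 1 / bk θ τ n 0
  | m + 1 => -(bk θ τ (n - m) 1 / bk θ τ (n - m - 1) 0) * dk θ τ n m

/-- Key algebraic inequality: if `0 < r ≤ (2 + 2√(2θ))/(2θ − 1)` then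
`(2θ − 1) r² ≤ 4(1 + r)`. -/
lemma wsbdf2_key_ineq (θ r : ℝ) (hθ : 1 / 2 < θ) (hr0 : 0 < r)
    (hrle : r ≤ (2 + 2 * Real.sqrt (2 * θ)) / (2 * θ - 1)) :
    (2 * θ - 1) * r ^ 2 ≤ 4 * (1 + r) := by
  set q := Real.sqrt (2 * θ) with hqdef
  have hq2 : q ^ 2 = 2 * θ := Real.sq_sqrt (by linarith)
  have hq0 : 0 ≤ q := Real.sqrt_nonneg _
  have hq1 : 1 < q := by nlinarith
  have ha : r * (2 * θ - 1) ≤ 2 + 2 * q := by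
    have := (le_div_iff₀ (by linarith : (0:ℝ) < 2 * θ - 1)).mp hrle
    linarith
  have hb : r * (q - 1) ≤ 2 := by nlinarith
  nlinarith [mul_le_mul_of_nonneg_right hb (by positivity : (0:ℝ) ≤ r * (q + 1)), hb]

/-- For `k ≥ 2` the inner convolution sum has only two nonzero terms. -/
lemma wsbdf2_inner_sum (θ : ℝ) (τ : ℕ → ℝ) (w : ℕ → ℝ) (k : ℕ) (hk : 2 ≤ k) :
    ∑ j ∈ Finset.Icc 1 k, bk θ τ k (k - j) * w j
      = bk θ τ k 0 * w k + bk θ τ k 1 * w (k - 1) := by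
  obtain ⟨m, rfl⟩ : ∃ m, k = m + 2 := ⟨k - 2, by omega⟩
  rw [show m + 2 = (m + 1) + 1 from rfl,
    Finset.sum_Icc_succ_top (by omega : 1 ≤ m + 1 + 1),
    Finset.sum_Icc_succ_top (by omega : 1 ≤ m + 1)]
  have h0 : ∑ j ∈ Finset.Icc 1 m, bk θ τ (m + 1 + 1) (m + 1 + 1 - j) * w j = 0 := by
    apply Finset.sum_eq_zero
    intro j hj
    simp only [mem_Icc] at hj
    have hb : bk θ τ (m + 1 + 1) (m + 1 + 1 - j) = 0 := by
      unfold bk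
      have h1 : m + 1 + 1 ≠ 1 := by omega
      have h2 : m + 1 + 1 - j ≠ 0 := by omega
      have h3 : m + 1 + 1 - j ≠ 1 := by omega
      simp [h1, h2, h3]
    simp [hb]
  rw [h0]
  have e1 : m + 1 + 1 - (m + 1 + 1) = 0 := by omega
  have e2 : m + 1 + 1 - (m + 1) = 1 := by omega
  have e3 : m + 1 + 1 - 1 = m + 1 := by omega
  rw [e1, e2, e3]
  ring

/-- The single-step quadratic inequality used in the induction. -/
lemma wsbdf2_step (θ r a b t : ℝ) (hθ1 : 1 / 2 < θ) (hr0 : 0 < r) (ht : 0 < t)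
    (hkey : (2 * θ - 1) * r ^ 2 ≤ 4 * (1 + r)) :
    b ^ 2 / (r * t) ≤ a ^ 2 / t +
      ((1 + 2 * θ * r) / ((r * t) * (1 + r)) * b
        + (1 - 2 * θ) * r ^ 2 / ((r * t) * (1 + r)) * a) * b := by
  have h1r : (0:ℝ) < 1 + r := by linarith
  have hB4 : 0 ≤ 4 * (1 + r) * ((1 + r) * a ^ 2 + (1 - 2 * θ) * r * (a * b)
      + (2 * θ - 1) * b ^ 2) := by
    nlinarith [sq_nonneg (2 * (1 + r) * a - (2 * θ - 1) * r * b),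
      mul_nonneg (mul_nonneg (by linarith : (0:ℝ) ≤ 2 * θ - 1)
        (by linarith : (0:ℝ) ≤ 4 * (1 + r) - (2 * θ - 1) * r ^ 2)) (sq_nonneg b)]
  have hB : 0 ≤ (1 + r) * a ^ 2 + (1 - 2 * θ) * r * (a * b) + (2 * θ - 1) * b ^ 2 := by
    nlinarith [hB4, h1r]
  have hpoly : 0 ≤ r * ((1 + r) * a ^ 2 + (1 - 2 * θ) * r * (a * b)
      + (2 * θ - 1) * b ^ 2) := mul_nonneg hr0.le hB
  rw [← sub_nonneg]
  have heq : (a ^ 2 / t +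
      ((1 + 2 * θ * r) / ((r * t) * (1 + r)) * b
        + (1 - 2 * θ) * r ^ 2 / ((r * t) * (1 + r)) * a) * b) - b ^ 2 / (r * t)
      = (r * ((1 + r) * a ^ 2 + (1 - 2 * θ) * r * (a * b) + (2 * θ - 1) * b ^ 2))
        / (r * t * (1 + r)) := by
    field_simp
    ring
  rw [heq]
  exact div_nonneg hpoly (by positivity)

/-- For `θ ∈ (1/2, 1]`, if every adjacent step ratio satisfies
`0 < r_k ≤ r_p = (2 + 2√(2θ))/(2θ − 1)` for `2 ≤ k ≤ n`, then the WSBDF2 convolution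
kernels are positive semi-definite:
`∑_{k=1}^n w_k ∑_{j=1}^k b_{k−j}^{(k)} w_j ≥ 0` for every real sequence `w`. -/
theorem wsbdf2_kernels_psd_of_ratio_le_rp
    (θ : ℝ) (hθ : 1 / 2 < θ ∧ θ ≤ 1)
    (N : ℕ) (hN : 1 ≤ N)
    (τ : ℕ → ℝ) (hτ : ∀ k, 1 ≤ k → k ≤ N → 0 < τ k)
    (n : ℕ) (hn : 1 ≤ n) (hnN : n ≤ N)
    (hr : ∀ k, 2 ≤ k → k ≤ n →
      0 < rr τ k ∧ rr τ k ≤ (2 + 2 * Real.sqrt (2 * θ)) / (2 * θ - 1))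
    (w : ℕ → ℝ) :
    0 ≤ ∑ k ∈ Finset.Icc 1 n, w k * ∑ j ∈ Finset.Icc 1 k, bk θ τ k (k - j) * w j := by
  obtain ⟨hθ1, hθ2⟩ := hθ
  have key : ∀ m, 1 ≤ m → m ≤ n →
      w m ^ 2 / τ m ≤
        ∑ k ∈ Finset.Icc 1 m, w k * ∑ j ∈ Finset.Icc 1 k, bk θ τ k (k - j) * w j := by
    intro m hm
    induction m, hm using Nat.le_induction with
    | base =>
      intro _
      simp only [Finset.Icc_self, Finset.sum_singleton, Nat.sub_self]
      have hb : bk θ τ 1 0 = 1 / τ 1 := by unfold bk; simp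
      rw [hb]
      exact le_of_eq (by ring)
    | succ m hm ih =>
      intro hmn
      have hmn' : m ≤ n := by omega
      have hτm : 0 < τ m := hτ m hm (le_trans hmn' hnN)
      have hIH := ih hmn'
      obtain ⟨hr0, hrle⟩ := hr (m + 1) (by omega) hmn
      have hkey := wsbdf2_key_ineq θ (rr τ (m + 1)) hθ1 hr0 hrle
      have hrr : rr τ (m + 1) = τ (m + 1) / τ m := by simp [rr]
      have hT : τ (m + 1) = rr τ (m + 1) * τ m := by
        rw [hrr]; field_simp
      rw [Finset.sum_Icc_succ_top (by omega : 1 ≤ m + 1),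
        wsbdf2_inner_sum θ τ w (m + 1) (by omega)]
      have hb0 : bk θ τ (m + 1) 0
          = (1 + 2 * θ * rr τ (m + 1)) / (τ (m + 1) * (1 + rr τ (m + 1))) := by
        unfold bk
        have h1 : m + 1 ≠ 1 := by omega
        simp [h1, show m ≠ 0 by omega]
      have hb1 : bk θ τ (m + 1) 1
          = (1 - 2 * θ) * (rr τ (m + 1)) ^ 2 / (τ (m + 1) * (1 + rr τ (m + 1))) := by
        unfold bk
        have h1 : m + 1 ≠ 1 := by omega
        simp [h1, show m ≠ 0 by omega]
      have e3 : m + 1 - 1 = m := by omega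
      rw [hb0, hb1, e3]
      have hstep := wsbdf2_step θ (rr τ (m + 1)) (w m) (w (m + 1)) (τ m) hθ1 hr0 hτm hkey
      rw [← hT] at hstep
      linarith
  have hτn : 0 < τ n := hτ n hn hnN
  have hkeyn := key n hn le_rfl
  have h0 : 0 ≤ w n ^ 2 / τ n := by positivity
  linarith
end

section
/- Let θ ∈ (1/2, 1] and let r_2, …, r_n be positive reals with r_k ≤ r_p := (2 + 2√(2θ))/(2θ − 1) for all k. Define recursively l_1 := 2 and l_k := (2/(1 + r_k)²)·[(1 + r_k)(1 + 2θ r_k) − (2θ − 1)² r_k³/(2 l_{k−1})] for 2 ≤ k ≤ n. Then l_k ≥ 2 for every 1 ≤ k ≤ n. -/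
lemma key_step (θ R L : ℝ) (hθ : 1 / 2 < θ ∧ θ ≤ 1)
    (hR : 0 < R) (hRp : R ≤ (2 + 2 * Real.sqrt (2 * θ)) / (2 * θ - 1))
    (hL : 2 ≤ L) :
    2 ≤ 2 / (1 + R) ^ 2 *
      ((1 + R) * (1 + 2 * θ * R) - (2 * θ - 1) ^ 2 * R ^ 3 / (2 * L)) := by
  obtain ⟨hθ1, hθ2⟩ := hθ
  set s := Real.sqrt (2 * θ) with hs
  have hs2 : s ^ 2 = 2 * θ := Real.sq_sqrt (by linarith)
  have hs0 : 0 ≤ s := Real.sqrt_nonneg _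
  have hs1 : 1 < s := by nlinarith
  have ha : 0 < 2 * θ - 1 := by linarith
  -- from hRp : R * (2θ-1) ≤ 2 + 2s
  have h1 : R * (2 * θ - 1) ≤ 2 + 2 * s := (le_div_iff₀ ha).mp hRp
  -- (s-1) * R ≤ 2
  have h2 : (s - 1) * R ≤ 2 := by nlinarith
  -- (2θ-1) R² ≤ 4(1+R)
  have h3 : (2 * θ - 1) * R ^ 2 ≤ 4 * (1 + R) := by nlinarith [mul_nonneg (by linarith : (0:ℝ) ≤ s - 1) hR.le, sq_nonneg ((s-1)*R)]
  -- a² R³ / (2L) ≤ a² R³ / 4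
  have hnum : 0 ≤ (2 * θ - 1) ^ 2 * R ^ 3 := by positivity
  have h4 : (2 * θ - 1) ^ 2 * R ^ 3 / (2 * L) ≤ (2 * θ - 1) ^ 2 * R ^ 3 / 4 :=
    div_le_div_of_nonneg_left hnum (by norm_num) (by linarith)
  -- (1+R)(1+2θR) - a²R³/4 ≥ (1+R)²
  have h5 : (1 + R) ^ 2 ≤ (1 + R) * (1 + 2 * θ * R) - (2 * θ - 1) ^ 2 * R ^ 3 / 4 := by
    nlinarith [mul_le_mul_of_nonneg_left h3 (mul_nonneg ha.le hR.le)]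
  have hX : (1 + R) ^ 2 ≤ (1 + R) * (1 + 2 * θ * R) - (2 * θ - 1) ^ 2 * R ^ 3 / (2 * L) := by
    linarith
  have hpos : (0:ℝ) < (1 + R) ^ 2 := by positivity
  rw [div_mul_eq_mul_div, le_div_iff₀ hpos]
  nlinarith

/-- Let `θ ∈ (1/2, 1]` and let `r_2, …, r_n` be positive reals with
`r_k ≤ r_p = (2 + 2√(2θ))/(2θ − 1)`. Define recursively `l_1 = 2` and
`l_k = (2/(1 + r_k)²)·[(1 + r_k)(1 + 2θ r_k) − (2θ − 1)² r_k³/(2 l_{k−1})]` for `2 ≤ k ≤ n`.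
Then `l_k ≥ 2` for every `1 ≤ k ≤ n`. -/
theorem l_ge_two
    (θ : ℝ) (hθ : 1 / 2 < θ ∧ θ ≤ 1)
    (n : ℕ) (r : ℕ → ℝ)
    (hr : ∀ k, 2 ≤ k → k ≤ n →
      0 < r k ∧ r k ≤ (2 + 2 * Real.sqrt (2 * θ)) / (2 * θ - 1))
    (l : ℕ → ℝ) (hl1 : l 1 = 2)
    (hlk : ∀ k, 2 ≤ k → k ≤ n →
      l k = 2 / (1 + r k) ^ 2 *
        ((1 + r k) * (1 + 2 * θ * r k) - (2 * θ - 1) ^ 2 * (r k) ^ 3 / (2 * l (k - 1)))) :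
    ∀ k, 1 ≤ k → k ≤ n → 2 ≤ l k := by
  intro k
  induction k with
  | zero => omega
  | succ m ih =>
    intro h1 hn
    rcases Nat.lt_or_ge m 1 with h | h
    · have hm : m + 1 = 1 := by omega
      rw [hm, hl1]
    · have hL : 2 ≤ l m := ih h (by omega)
      have heq := hlk (m + 1) (by omega) hn
      simp only [Nat.add_sub_cancel] at heq
      rw [heq]
      obtain ⟨hpos, hle⟩ := hr (m + 1) (by omega) hn
      exact key_step θ (r (m + 1)) (l m) hθ hpos hle hL
end

section
/- Let θ ∈ (1/2, 1] and let r_s = r_s(θ) be the unique positive root of (1 − 2θ)² r³ − 4θ² r² − 4θ r − 1 = 0. Then for all real x, y with 0 ≤ x ≤ r_s and 0 ≤ y ≤ r_s, one has (2(1 + 2θ x) + (1 − 2θ) x^{3/2})/(1 + x) ≥ (2θ − 1) y^{3/2}/(1 + y). -/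
set_option maxHeartbeats 800000

/-- Let `θ ∈ (1/2, 1]` and let `r_s` be the unique positive root of
`(1 − 2θ)² r³ − 4θ² r² − 4θ r − 1 = 0`. Then for all `0 ≤ x ≤ r_s` and `0 ≤ y ≤ r_s`,
`(2(1 + 2θ x) + (1 − 2θ) x^{3/2})/(1 + x) ≥ (2θ − 1) y^{3/2}/(1 + y)`. -/
theorem h_nonneg_on_square
    (θ : ℝ) (hθ : 1 / 2 < θ ∧ θ ≤ 1)
    (rs : ℝ) (hrs_pos : 0 < rs)
    (hrs_root : (1 - 2 * θ) ^ 2 * rs ^ 3 - 4 * θ ^ 2 * rs ^ 2 - 4 * θ * rs - 1 = 0)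
    (hrs_uniq : ∀ r : ℝ, 0 < r →
      (1 - 2 * θ) ^ 2 * r ^ 3 - 4 * θ ^ 2 * r ^ 2 - 4 * θ * r - 1 = 0 → r = rs)
    (x y : ℝ) (hx0 : 0 ≤ x) (hxs : x ≤ rs) (hy0 : 0 ≤ y) (hys : y ≤ rs) :
    (2 * θ - 1) * y ^ ((3 : ℝ) / 2) / (1 + y) ≤
      (2 * (1 + 2 * θ * x) + (1 - 2 * θ) * x ^ ((3 : ℝ) / 2)) / (1 + x) := by
  obtain ⟨hθ1, hθ2⟩ := hθ
  set s := Real.sqrt rs with hs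
  set t := Real.sqrt x with ht
  set u := Real.sqrt y with hu
  clear_value s t u
  have hs0 : 0 < s := hs ▸ Real.sqrt_pos.2 hrs_pos
  have ht0 : 0 ≤ t := ht ▸ Real.sqrt_nonneg x
  have hu0 : 0 ≤ u := hu ▸ Real.sqrt_nonneg y
  have hts : t ≤ s := ht ▸ hs ▸ Real.sqrt_le_sqrt hxs
  have hus : u ≤ s := hu ▸ hs ▸ Real.sqrt_le_sqrt hys
  have hrs2 : rs = s ^ 2 := hs ▸ (Real.sq_sqrt hrs_pos.le).symm
  have hx2 : x = t ^ 2 := ht ▸ (Real.sq_sqrt hx0).symm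
  have hy2 : y = u ^ 2 := hu ▸ (Real.sq_sqrt hy0).symm
  have hx32 : x ^ ((3 : ℝ) / 2) = t ^ 3 := by
    rw [ht, Real.sqrt_eq_rpow, ← Real.rpow_natCast (x ^ ((1:ℝ)/2)) 3, ← Real.rpow_mul hx0]
    norm_num
  have hy32 : y ^ ((3 : ℝ) / 2) = u ^ 3 := by
    rw [hu, Real.sqrt_eq_rpow, ← Real.rpow_natCast (y ^ ((1:ℝ)/2)) 3, ← Real.rpow_mul hy0]
    norm_num
  have ha : 0 < 2 * θ - 1 := by linarith
  -- key identity: (2θ-1) s^3 = 1 + 2θ s^2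
  have hkey : (2 * θ - 1) * s ^ 3 = 1 + 2 * θ * s ^ 2 := by
    have hsq : ((2 * θ - 1) * s ^ 3) ^ 2 = (1 + 2 * θ * s ^ 2) ^ 2 := by
      rw [hrs2] at hrs_root; linear_combination hrs_root
    have hfact : ((2 * θ - 1) * s ^ 3 - (1 + 2 * θ * s ^ 2)) *
        ((2 * θ - 1) * s ^ 3 + (1 + 2 * θ * s ^ 2)) = 0 := by linear_combination hsq
    have h1 : 0 ≤ (2 * θ - 1) * s ^ 3 := by positivity
    have h2 : 0 < 1 + 2 * θ * s ^ 2 := by positivity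
    have hpos : 0 < (2 * θ - 1) * s ^ 3 + (1 + 2 * θ * s ^ 2) := by linarith
    have := (mul_eq_zero.1 hfact).resolve_right (ne_of_gt hpos)
    linarith
  rw [hx32, hy32, hx2, hy2]
  have hdu : (0:ℝ) < 1 + u ^ 2 := by positivity
  have hdt : (0:ℝ) < 1 + t ^ 2 := by positivity
  have hds : (0:ℝ) < 1 + s ^ 2 := by positivity
  rw [div_le_div_iff₀ hdu hdt]
  -- step 1 : (2θ-1) u³ (1+s²) ≤ (1+2θs²)(1+u²)
  have step1 : (2 * θ - 1) * u ^ 3 * (1 + s ^ 2) ≤ (1 + 2 * θ * s ^ 2) * (1 + u ^ 2) := by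
    have hA : 0 ≤ (s - u) * (s ^ 2 + s * u + u ^ 2) :=
      mul_nonneg (sub_nonneg.2 hus)
        (by nlinarith [mul_nonneg hs0.le hu0, sq_nonneg s, sq_nonneg u])
    have hB : 0 ≤ s ^ 2 * u ^ 2 * (s - u) :=
      mul_nonneg (mul_nonneg (sq_nonneg s) (sq_nonneg u)) (sub_nonneg.2 hus)
    have hid1 : s ^ 3 * (1 + u ^ 2) - u ^ 3 * (1 + s ^ 2)
        = (s - u) * (s ^ 2 + s * u + u ^ 2) + s ^ 2 * u ^ 2 * (s - u) := by ring
    have hle : u ^ 3 * (1 + s ^ 2) ≤ s ^ 3 * (1 + u ^ 2) := by linarith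
    have := mul_le_mul_of_nonneg_left hle ha.le
    nlinarith [this, hkey]
  -- step 2 : (1+2θs²)(1+t²) ≤ (2(1+2θt²)+(1-2θ)t³)(1+s²)
  have step2 : (1 + 2 * θ * s ^ 2) * (1 + t ^ 2) ≤
      (2 * (1 + 2 * θ * t ^ 2) + (1 - 2 * θ) * t ^ 3) * (1 + s ^ 2) := by
    have ht2s2 : t ^ 2 ≤ s ^ 2 := by nlinarith
    have hA : 0 ≤ (s ^ 2 - t ^ 2) * (1 + (2 - 2 * θ) * s ^ 2) := by
      have : 0 ≤ (2 - 2 * θ) * s ^ 2 := mul_nonneg (by linarith) (sq_nonneg s)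
      have h2 : 0 ≤ s ^ 2 - t ^ 2 := by linarith
      exact mul_nonneg h2 (by linarith)
    have hB : 0 ≤ (2 * θ - 1) * (1 + s ^ 2) * (t ^ 2 * s ^ 2) * (s - t) :=
      mul_nonneg (mul_nonneg (mul_nonneg ha.le hds.le)
        (mul_nonneg (sq_nonneg t) (sq_nonneg s))) (sub_nonneg.2 hts)
    have hC : (2 * θ - 1) * s ^ 3 - (1 + 2 * θ * s ^ 2) = 0 := by linarith
    have hid2 : s ^ 2 * ((2 * (1 + 2 * θ * t ^ 2) + (1 - 2 * θ) * t ^ 3) * (1 + s ^ 2)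
          - (1 + 2 * θ * s ^ 2) * (1 + t ^ 2))
        = (s ^ 2 - t ^ 2) * (1 + (2 - 2 * θ) * s ^ 2)
          + (2 * θ - 1) * (1 + s ^ 2) * (t ^ 2 * s ^ 2) * (s - t)
          - t ^ 2 * (1 + s ^ 2) * ((2 * θ - 1) * s ^ 3 - (1 + 2 * θ * s ^ 2)) := by ring
    rw [hC, mul_zero, sub_zero] at hid2
    have hmul : 0 ≤ s ^ 2 * ((2 * (1 + 2 * θ * t ^ 2) + (1 - 2 * θ) * t ^ 3) * (1 + s ^ 2)
        - (1 + 2 * θ * s ^ 2) * (1 + t ^ 2)) := by rw [hid2]; exact add_nonneg hA hB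
    have hD := (mul_nonneg_iff_of_pos_left (pow_pos hs0 2)).mp hmul
    linarith
  -- combine
  have hfin : (2 * θ - 1) * u ^ 3 * (1 + t ^ 2) * (1 + s ^ 2) ≤
      (2 * (1 + 2 * θ * t ^ 2) + (1 - 2 * θ) * t ^ 3) * (1 + u ^ 2) * (1 + s ^ 2) := by
    have hA := mul_le_mul_of_nonneg_right step1 hdt.le
    have hB := mul_le_mul_of_nonneg_right step2 hdu.le
    nlinarith [hA, hB]
  exact le_of_mul_le_mul_right hfin hds
end

section
/- Let θ ∈ (1/2, 1], let k ≥ 2, and let τ_{k−1}, τ_k, τ_{k+1} > 0 with ratios r_k := τ_k/τ_{k−1} and r_{k+1} := τ_{k+1}/τ_k satisfying 0 < r_k ≤ r_s and 0 < r_{k+1} ≤ r_s. Then for all real numbers ω_{k−1}, ω_k: 2 ω_k (b_0^{(k)} ω_k + b_1^{(k)} ω_{k−1}) ≥ ((2θ − 1) r_{k+1}^{3/2}/(1 + r_{k+1})) · ω_k²/τ_k − ((2θ − 1) r_k^{3/2}/(1 + r_k)) · ω_{k−1}²/τ_{k−1}, where b_0^{(k)} = (1 + 2θ r_k)/(τ_k(1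 + r_k)) and b_1^{(k)} = (1 − 2θ) r_k²/(τ_k(1 + r_k)). -/
/-- Let `θ ∈ (1/2, 1]` and `τ_{k−1}, τ_k, τ_{k+1} > 0` with ratios
`r_k = τ_k/τ_{k−1}` and `r_{k+1} = τ_{k+1}/τ_k` both in `(0, r_s]`, where `r_s` is the
unique positive root of `(1 − 2θ)² r³ − 4θ² r² − 4θ r − 1 = 0`. Then for all reals
`ω_{k−1}, ω_k`:
`2 ω_k (b_0^{(k)} ω_k + b_1^{(k)} ω_{k−1}) ≥
 ((2θ−1) r_{k+1}^{3/2}/(1+r_{k+1})) ω_k²/τ_k − ((2θ−1) r_k^{3/2}/(1+r_k)) ω_{k−1}²/τ_{k−1}`,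
with `b_0^{(k)} = (1 + 2θ r_k)/(τ_k(1 + r_k))`, `b_1^{(k)} = (1 − 2θ) r_k²/(τ_k(1 + r_k))`. -/
theorem wsbdf2_local_lower_bound
    (θ : ℝ) (hθ : 1 / 2 < θ ∧ θ ≤ 1)
    (rs : ℝ) (hrs_pos : 0 < rs)
    (hrs_root : (1 - 2 * θ) ^ 2 * rs ^ 3 - 4 * θ ^ 2 * rs ^ 2 - 4 * θ * rs - 1 = 0)
    (hrs_uniq : ∀ r : ℝ, 0 < r →
      (1 - 2 * θ) ^ 2 * r ^ 3 - 4 * θ ^ 2 * r ^ 2 - 4 * θ * r - 1 = 0 → r = rs)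
    (τkm1 τk τkp1 : ℝ) (hτkm1 : 0 < τkm1) (hτk : 0 < τk) (hτkp1 : 0 < τkp1)
    (hrk : τk / τkm1 ≤ rs) (hrkp1 : τkp1 / τk ≤ rs)
    (ωkm1 ωk : ℝ) :
    (2 * θ - 1) * (τkp1 / τk) ^ ((3 : ℝ) / 2) / (1 + τkp1 / τk) * (ωk ^ 2 / τk) -
      (2 * θ - 1) * (τk / τkm1) ^ ((3 : ℝ) / 2) / (1 + τk / τkm1) * (ωkm1 ^ 2 / τkm1) ≤
    2 * ωk * ((1 + 2 * θ * (τk / τkm1)) / (τk * (1 + τk / τkm1)) * ωk +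
      (1 - 2 * θ) * (τk / τkm1) ^ 2 / (τk * (1 + τk / τkm1)) * ωkm1) := by
  obtain ⟨hθ1, hθ2⟩ := hθ
  have hθ' : 0 ≤ 2 * θ - 1 := by linarith
  set r : ℝ := τk / τkm1 with hr_def
  set s : ℝ := τkp1 / τk with hs_def
  have hr : 0 < r := div_pos hτk hτkm1
  have hs : 0 < s := div_pos hτkp1 hτk
  clear_value r s
  set a := Real.sqrt r with ha_def
  set b := Real.sqrt s with hb_def
  set c := Real.sqrt rs with hc_def
  have ha : 0 < a := Real.sqrt_pos.2 hr
  have hb : 0 < b := Real.sqrt_pos.2 hs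
  have hc : 0 < c := Real.sqrt_pos.2 hrs_pos
  have ha2 : a ^ 2 = r := Real.sq_sqrt hr.le
  have hb2 : b ^ 2 = s := Real.sq_sqrt hs.le
  have hc2 : c ^ 2 = rs := Real.sq_sqrt hrs_pos.le
  have hac : a ≤ c := by rw [ha_def, hc_def]; exact Real.sqrt_le_sqrt hrk
  have hbc : b ≤ c := by rw [hb_def, hc_def]; exact Real.sqrt_le_sqrt hrkp1
  have threehalf : ∀ x : ℝ, 0 ≤ x → x ^ ((3 : ℝ) / 2) = x * Real.sqrt x := by
    intro x hx
    rw [show (3 : ℝ) / 2 = (1 / 2) * 3 by norm_num, Real.rpow_mul hx,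
      ← Real.sqrt_eq_rpow, show (3 : ℝ) = ((3 : ℕ) : ℝ) by norm_num,
      Real.rpow_natCast, pow_succ, pow_two, Real.mul_self_sqrt hx]
  clear_value a b c
  have h1rs : (0 : ℝ) < 1 + rs := by linarith
  have h1r : (0 : ℝ) < 1 + r := by linarith
  have h1s : (0 : ℝ) < 1 + s := by linarith
  have hR : (0 : ℝ) < 2 * θ * rs + 1 := by nlinarith [mul_pos (show (0:ℝ) < θ by linarith) hrs_pos]
  -- key identity from the cubic: (2θ-1)·rs·√rs = 2θ·rs + 1
  have hkey : (2 * θ - 1) * rs * c = 2 * θ * rs + 1 := by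
    have hsq : ((2 * θ - 1) * rs * c) ^ 2 = (2 * θ * rs + 1) ^ 2 := by
      linear_combination ((2 * θ - 1) ^ 2 * rs ^ 2) * hc2 + hrs_root
    have h0 : ((2 * θ - 1) * rs * c - (2 * θ * rs + 1)) *
        ((2 * θ - 1) * rs * c + (2 * θ * rs + 1)) = 0 := by linear_combination hsq
    rcases mul_eq_zero.mp h0 with h | h
    · linarith
    · exfalso
      have : 0 ≤ (2 * θ - 1) * rs * c := by positivity
      linarith
  set C : ℝ := (2 * θ * rs + 1) / (1 + rs) with hC_def
  clear_value C
  have hC : C * (1 + rs) = 2 * θ * rs + 1 := by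
    rw [hC_def]; field_simp
  -- monotonicity: s·√s/(1+s) ≤ rs·√rs/(1+rs)
  have hmono : s * b * (1 + rs) ≤ rs * c * (1 + s) := by
    rw [← hb2, ← hc2]
    nlinarith [pow_le_pow_left₀ hb.le hbc 3,
      mul_le_mul_of_nonneg_left hbc (show (0:ℝ) ≤ b ^ 2 * c ^ 2 by positivity)]
  -- rewrite rpow terms in the goal
  rw [threehalf s hs.le, threehalf r hr.le, ← hb_def, ← ha_def]
  set D : ℝ := (2 * θ - 1) * (s * b) / (1 + s) with hD_def
  clear_value D
  have hD_le : D ≤ C := by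
    rw [hD_def, hC_def, div_le_div_iff₀ h1s h1rs, ← hkey]
    calc (2 * θ - 1) * (s * b) * (1 + rs) = (2 * θ - 1) * (s * b * (1 + rs)) := by ring
      _ ≤ (2 * θ - 1) * (rs * c * (1 + s)) := mul_le_mul_of_nonneg_left hmono hθ'
      _ = (2 * θ - 1) * rs * c * (1 + s) := by ring
  -- linear bound ψ(r) ≥ 0
  have hψ : (2 * (1 + 2 * θ * r) - (1 + r) * C - (2 * θ - 1) * r * c)
      * (rs * (1 + rs)) = (rs - r) * (1 + 2 * rs - 2 * θ * rs) := by
    linear_combination (-(1 + r) * rs) * hC + (-(r * (1 + rs))) * hkey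
  have hE : 0 ≤ 2 * (1 + 2 * θ * r) - (1 + r) * C - (2 * θ - 1) * r * c := by
    have h2 : 0 ≤ (rs - r) * (1 + 2 * rs - 2 * θ * rs) := by
      apply mul_nonneg (by linarith)
      have := mul_nonneg hrs_pos.le (show (0:ℝ) ≤ 1 - θ by linarith)
      linarith
    have h2' : 0 ≤ (2 * (1 + 2 * θ * r) - (1 + r) * C - (2 * θ - 1) * r * c)
        * (rs * (1 + rs)) := by rw [hψ]; exact h2
    exact (mul_nonneg_iff_of_pos_right (mul_pos hrs_pos h1rs)).1 h2'
  have hbr : 0 ≤ 2 * (1 + 2 * θ * r) - D * (1 + r) - (2 * θ - 1) * r * a := by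
    have h3 : 0 ≤ (C - D) * (1 + r) := mul_nonneg (by linarith) (by linarith)
    have h4 : 0 ≤ (2 * θ - 1) * r * (c - a) :=
      mul_nonneg (mul_nonneg hθ' hr.le) (by linarith)
    linarith [hE, h3, h4]
  -- nonnegativity of the numerator
  have hnum : 0 ≤ (2*θ-1)*r*a*ωk^2 - 2*(2*θ-1)*r^2*ωk*ωkm1 + (2*θ-1)*r^2*a*ωkm1^2
      + (2*(1+2*θ*r) - D*(1+r) - (2*θ-1)*r*a) * ωk^2 := by
    have h5 : (2*θ-1)*r*a*ωk^2 - 2*(2*θ-1)*r^2*ωk*ωkm1 + (2*θ-1)*r^2*a*ωkm1^2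
        = (2*θ-1)*r*a*(ωk - a*ωkm1)^2 := by
      linear_combination (2*(2*θ-1)*r*ωk*ωkm1 - (2*θ-1)*r*a*ωkm1^2) * ha2
    rw [h5]
    have h6 : 0 ≤ (2*θ-1)*r*a*(ωk - a*ωkm1)^2 := by positivity
    exact add_nonneg h6 (mul_nonneg hbr (sq_nonneg ωk))
  -- replace ωkm1²/τkm1 by r·ωkm1²/τk
  have hτ_eq : ωkm1 ^ 2 / τkm1 = r * ωkm1 ^ 2 / τk := by
    rw [hr_def]; field_simp
  rw [hτ_eq]
  -- the algebraic identity
  have key : 2*ωk*((1+2*θ*r)/(τk*(1+r))*ωk + (1-2*θ)*r^2/(τk*(1+r))*ωkm1)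
      - (D * (ωk^2/τk) - (2*θ-1)*(r*a)/(1+r)*(r*ωkm1^2/τk))
      = ((2*θ-1)*r*a*ωk^2 - 2*(2*θ-1)*r^2*ωk*ωkm1 + (2*θ-1)*r^2*a*ωkm1^2
        + (2*(1+2*θ*r) - D*(1+r) - (2*θ-1)*r*a) * ωk^2) / (τk*(1+r)) := by
    field_simp
    ring
  have hdiv : 0 ≤ ((2*θ-1)*r*a*ωk^2 - 2*(2*θ-1)*r^2*ωk*ωkm1 + (2*θ-1)*r^2*a*ωkm1^2
      + (2*(1+2*θ*r) - D*(1+r) - (2*θ-1)*r*a) * ωk^2) / (τk*(1+r)) :=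
    div_nonneg hnum (by positivity)
  linarith [key, hdiv]
end

section
/- Let θ ∈ (1/2, 1] and suppose the adjacent step ratios satisfy 0 < r_k ≤ r_s for all 2 ≤ k ≤ n, where r_s is the unique positive root of (1 − 2θ)² r³ − 4θ² r² − 4θ r − 1 = 0. Then for every real sequence ω_1, …, ω_n one has ∑_{k=1}^n ω_k ∑_{j=1}^k b_{k−j}^{(k)} ω_j ≥ 0, i.e., the WSBDF2 convolution kernels are positive semi-definite. -/
set_option maxHeartbeats 1600000


open Finset

/-- Auxiliary sequence for successive completion of squares: the remaining
diagonal weight after paying for the off-diagonal coupling. -/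
noncomputable def ee (θ : ℝ) (τ : ℕ → ℝ) : ℕ → ℝ
  | 0 => 0
  | 1 => 1 / τ 1
  | (k + 2) => bk θ τ (k + 2) 0 - (bk θ τ (k + 2) 1) ^ 2 / (4 * ee θ τ (k + 1))

lemma ee_succ (θ : ℝ) (τ : ℕ → ℝ) (m : ℕ) (hm : 1 ≤ m) :
    ee θ τ (m + 1)
      = bk θ τ (m + 1) 0 - (bk θ τ (m + 1) 1) ^ 2 / (4 * ee θ τ m) := by
  obtain ⟨k, rfl⟩ : ∃ k, m = k + 1 := ⟨m - 1, by omega⟩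
  rfl

/-- The key polynomial inequality: for `0 < r ≤ rs`, with `rs` the positive root,
the (cleared-denominator) step inequality holds. -/
lemma keyG (θ rs r : ℝ) (hθ1 : 1 / 2 < θ) (hθ2 : θ ≤ 1) (hrs : 0 < rs)
    (hroot : (1 - 2 * θ) ^ 2 * rs ^ 3 - 4 * θ ^ 2 * rs ^ 2 - 4 * θ * rs - 1 = 0)
    (hr0 : 0 < r) (hrrs : r ≤ rs) :
    0 ≤ 2 * (1 + 2 * θ * rs) * (1 + rs) * (1 + 2 * θ * r) * (1 + r)
        - (2 * θ - 1) ^ 2 * r ^ 3 * (1 + rs) ^ 2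
        - (1 + 2 * θ * rs) ^ 2 * (1 + r) ^ 2 := by
  have hus : (0 : ℝ) < 1 + 2 * θ * rs := by nlinarith
  have hz : (1 + 2 * θ * rs) ^ 2 - (2 * θ - 1) ^ 2 * rs ^ 3 = 0 := by
    linear_combination -hroot
  have hsr : 0 ≤ rs - r := by linarith
  have hid : rs ^ 3 * (2 * (1 + 2 * θ * rs) * (1 + rs) * (1 + 2 * θ * r) * (1 + r)
        - (2 * θ - 1) ^ 2 * r ^ 3 * (1 + rs) ^ 2
        - (1 + 2 * θ * rs) ^ 2 * (1 + r) ^ 2)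
      = (1 + 2 * θ * rs) * (1 + 2 * (1 - θ) * rs) * ((rs - r) * (rs ^ 2 + rs * r + r ^ 2))
      + (1 + 2 * θ * rs) * (2 * rs + 4 * θ) * (r * rs * (rs - r) * (rs + r))
      + (1 + 2 * θ * rs) * (4 * θ - 1 + 2 * θ * rs) * (r ^ 2 * rs ^ 2 * (rs - r))
      + r ^ 3 * (1 + rs) ^ 2 * ((1 + 2 * θ * rs) ^ 2 - (2 * θ - 1) ^ 2 * rs ^ 3) := by
    ring
  have t0 : 0 ≤ (1 + 2 * θ * rs) * (1 + 2 * (1 - θ) * rs)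
      * ((rs - r) * (rs ^ 2 + rs * r + r ^ 2)) := by
    apply mul_nonneg (mul_nonneg hus.le (by nlinarith)) (mul_nonneg hsr (by positivity))
  have t1 : 0 ≤ (1 + 2 * θ * rs) * (2 * rs + 4 * θ) * (r * rs * (rs - r) * (rs + r)) := by
    apply mul_nonneg (mul_nonneg hus.le (by nlinarith))
    apply mul_nonneg (mul_nonneg (by positivity) hsr) (by positivity)
  have t2 : 0 ≤ (1 + 2 * θ * rs) * (4 * θ - 1 + 2 * θ * rs)
      * (r ^ 2 * rs ^ 2 * (rs - r)) := by
    apply mul_nonneg (mul_nonneg hus.le (by nlinarith))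
    exact mul_nonneg (by positivity) hsr
  rw [hz, mul_zero, add_zero] at hid
  by_contra hneg
  push_neg at hneg
  nlinarith [pow_pos hrs 3, hid, t0, t1, t2]

/-- Let `θ ∈ (1/2, 1]` and suppose the adjacent step ratios satisfy
`0 < r_k ≤ r_s` for `2 ≤ k ≤ n`, where `r_s` is the unique positive root of
`(1 − 2θ)² r³ − 4θ² r² − 4θ r − 1 = 0`. Then the WSBDF2 convolution kernels are positive
semi-definite: `∑_{k=1}^n ω_k ∑_{j=1}^k b_{k−j}^{(k)} ω_j ≥ 0` for every real sequence. -/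
theorem wsbdf2_kernels_psd_of_ratio_le_rs
    (θ : ℝ) (hθ : 1 / 2 < θ ∧ θ ≤ 1)
    (N : ℕ) (hN : 1 ≤ N)
    (τ : ℕ → ℝ) (hτ : ∀ k, 1 ≤ k → k ≤ N → 0 < τ k)
    (n : ℕ) (hn : 1 ≤ n) (hnN : n ≤ N)
    (rs : ℝ) (hrs_pos : 0 < rs)
    (hrs_root : (1 - 2 * θ) ^ 2 * rs ^ 3 - 4 * θ ^ 2 * rs ^ 2 - 4 * θ * rs - 1 = 0)
    (hrs_uniq : ∀ r : ℝ, 0 < r →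
      (1 - 2 * θ) ^ 2 * r ^ 3 - 4 * θ ^ 2 * r ^ 2 - 4 * θ * r - 1 = 0 → r = rs)
    (hr : ∀ k, 2 ≤ k → k ≤ n → 0 < rr τ k ∧ rr τ k ≤ rs)
    (ω : ℕ → ℝ) :
    0 ≤ ∑ k ∈ Finset.Icc 1 n, ω k * ∑ j ∈ Finset.Icc 1 k, bk θ τ k (k - j) * ω j := by
  obtain ⟨hθ1, hθ2⟩ := hθ
  have hus : (0 : ℝ) < 1 + 2 * θ * rs := by nlinarith
  have hvs : (0 : ℝ) < 1 + rs := by linarith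
  suffices H : ∀ m, 1 ≤ m → m ≤ n →
      (1 + 2 * θ * rs ≤ 2 * (1 + rs) * (τ m * ee θ τ m)) ∧
      ee θ τ m * (ω m) ^ 2
        ≤ ∑ k ∈ Finset.Icc 1 m, ω k * ∑ j ∈ Finset.Icc 1 k, bk θ τ k (k - j) * ω j by
    obtain ⟨h1, h2⟩ := H n hn le_rfl
    have hτn : 0 < τ n := hτ n hn hnN
    have he : 0 < ee θ τ n := by nlinarith [mul_pos hvs hτn, h1]
    nlinarith [sq_nonneg (ω n)]
  intro m hm
  induction m, hm using Nat.le_induction with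
  | base =>
    intro _
    have hτ1 : 0 < τ 1 := hτ 1 le_rfl hN
    have hee1 : ee θ τ 1 = 1 / τ 1 := rfl
    have hbk1 : bk θ τ 1 (1 - 1) = 1 / τ 1 := by simp [bk]
    constructor
    · rw [hee1]
      have : τ 1 * (1 / τ 1) = 1 := by field_simp
      rw [this]
      nlinarith
    · simp only [Finset.Icc_self, Finset.sum_singleton]
      rw [hbk1, hee1]
      apply le_of_eq; ring
  | succ m hm1 ih =>
    intro hm1n
    obtain ⟨inv, hQ⟩ := ih (by omega)
    have hm0 : m + 1 ≠ 1 := by omega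
    obtain ⟨hr0, hrrs⟩ := hr (m + 1) (by omega) hm1n
    have hτm : 0 < τ m := hτ m (by omega) (by omega)
    have hτm1 : 0 < τ (m + 1) := hτ (m + 1) (by omega) (by omega)
    set r := rr τ (m + 1) with hrdef
    have hv : (0 : ℝ) < 1 + r := by linarith
    have hrτ : τ (m + 1) = r * τ m := by
      rw [hrdef, rr]
      simp only [Nat.add_sub_cancel]
      field_simp
    have hb0 : bk θ τ (m + 1) 0 = (1 + 2 * θ * r) / ((r * τ m) * (1 + r)) := by
      rw [bk]; simp only [hm0, if_false, if_true, ← hrdef, ← hrτ]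
    have hb1 : bk θ τ (m + 1) 1 = (1 - 2 * θ) * r ^ 2 / ((r * τ m) * (1 + r)) := by
      rw [bk]; simp only [hm0, if_false, ← hrdef, ← hrτ]; rfl
    have he : 0 < ee θ τ m := by nlinarith [mul_pos hvs hτm]
    have hL := keyG θ rs r hθ1 hθ2 hrs_pos hrs_root hr0 hrrs
    have estep : ee θ τ (m + 1)
        = (1 + 2 * θ * r) / ((r * τ m) * (1 + r))
          - ((1 - 2 * θ) * r ^ 2 / ((r * τ m) * (1 + r))) ^ 2 / (4 * ee θ τ m) := by
      rw [ee_succ θ τ m hm1, hb0, hb1]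
    -- bound the subtracted term
    have hclean : ((1 - 2 * θ) * r ^ 2 / ((r * τ m) * (1 + r))) ^ 2 / (4 * ee θ τ m)
        = (2 * θ - 1) ^ 2 * r ^ 4 / (4 * ee θ τ m * (r * τ m) ^ 2 * (1 + r) ^ 2) := by
      field_simp
      ring
    have hb1sq : ((1 - 2 * θ) * r ^ 2 / ((r * τ m) * (1 + r))) ^ 2 / (4 * ee θ τ m)
        ≤ (2 * θ - 1) ^ 2 * r ^ 3 * (1 + rs)
          / (2 * (1 + 2 * θ * rs) * (1 + r) ^ 2 * (r * τ m)) := by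
      rw [hclean, div_le_div_iff₀ (by positivity) (by positivity)]
      have hc : (0 : ℝ) ≤ 2 * (2 * θ - 1) ^ 2 * r ^ 5 * τ m * (1 + r) ^ 2 := by positivity
      have hmul := mul_le_mul_of_nonneg_left inv hc
      ring_nf at hmul ⊢
      linarith [hmul]
    have hA : 2 * (1 + rs) * ((r * τ m) * ((1 + 2 * θ * r) / ((r * τ m) * (1 + r))
          - (2 * θ - 1) ^ 2 * r ^ 3 * (1 + rs)
            / (2 * (1 + 2 * θ * rs) * (1 + r) ^ 2 * (r * τ m))))
        - (1 + 2 * θ * rs)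
        = (2 * (1 + 2 * θ * rs) * (1 + rs) * (1 + 2 * θ * r) * (1 + r)
            - (2 * θ - 1) ^ 2 * r ^ 3 * (1 + rs) ^ 2
            - (1 + 2 * θ * rs) ^ 2 * (1 + r) ^ 2)
          / ((1 + 2 * θ * rs) * (1 + r) ^ 2) := by
      field_simp
    have h1 : (1 + 2 * θ * r) / ((r * τ m) * (1 + r))
          - (2 * θ - 1) ^ 2 * r ^ 3 * (1 + rs)
            / (2 * (1 + 2 * θ * rs) * (1 + r) ^ 2 * (r * τ m))
        ≤ ee θ τ (m + 1) := by
      rw [estep]; linarith [hb1sq]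
    have hInv : 1 + 2 * θ * rs ≤ 2 * (1 + rs) * (τ (m + 1) * ee θ τ (m + 1)) := by
      rw [hrτ]
      have h2 := mul_le_mul_of_nonneg_left h1 (show (0:ℝ) ≤ r * τ m by positivity)
      have h3 := mul_le_mul_of_nonneg_left h2 (show (0:ℝ) ≤ 2 * (1 + rs) by positivity)
      have h4 : 0 ≤ (2 * (1 + 2 * θ * rs) * (1 + rs) * (1 + 2 * θ * r) * (1 + r)
            - (2 * θ - 1) ^ 2 * r ^ 3 * (1 + rs) ^ 2
            - (1 + 2 * θ * rs) ^ 2 * (1 + r) ^ 2)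
          / ((1 + 2 * θ * rs) * (1 + r) ^ 2) := div_nonneg hL (by positivity)
      linarith [hA ▸ h4]
    refine ⟨hInv, ?_⟩
    -- split the quadratic form
    have hsplit : ∑ k ∈ Finset.Icc 1 (m + 1), ω k
          * ∑ j ∈ Finset.Icc 1 k, bk θ τ k (k - j) * ω j
        = (∑ k ∈ Finset.Icc 1 m, ω k * ∑ j ∈ Finset.Icc 1 k, bk θ τ k (k - j) * ω j)
          + ω (m + 1) * (bk θ τ (m + 1) 1 * ω m + bk θ τ (m + 1) 0 * ω (m + 1)) := by
      rw [Finset.sum_Icc_succ_top (by omega : 1 ≤ m + 1)]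
      congr 1
      congr 1
      rw [Finset.sum_Icc_succ_top (by omega : 1 ≤ m + 1)]
      congr 1
      · rw [Finset.sum_eq_single_of_mem m (by simp [Finset.mem_Icc]; omega)]
        · rw [show m + 1 - m = 1 by omega]
        · intro j hj hne
          have hj' := Finset.mem_Icc.mp hj
          have h2le : 2 ≤ m + 1 - j := by omega
          have e0 : m + 1 - j ≠ 0 := by omega
          have e1 : m + 1 - j ≠ 1 := by omega
          rw [bk]
          simp [hm0, e0, e1]
      · rw [Nat.sub_self]
    rw [hsplit]
    have hd : (bk θ τ (m + 1) 0 - ee θ τ (m + 1)) * (4 * ee θ τ m)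
        = (bk θ τ (m + 1) 1) ^ 2 := by
      rw [ee_succ θ τ m hm1]
      field_simp
      ring
    nlinarith [sq_nonneg (2 * ee θ τ m * ω m + bk θ τ (m + 1) 1 * ω (m + 1)), hd, he,
      sq_nonneg (ω (m + 1)), hQ]
end

section
/- Suppose the WSBDF2 convolution kernels are positive semi-definite, i.e., ∑_{k=1}^n w_k ∑_{j=1}^k b_{k−j}^{(k)} w_j ≥ 0 for every real sequence w_1, …, w_n. Then the DOC kernels are also positive semi-definite: ∑_{k=1}^n w_k ∑_{j=1}^k d_{k−j}^{(k)} w_j ≥ 0 for every real sequence w_1, …, w_n. -/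
open Finset

lemma bk_eq_zero (θ : ℝ) (τ : ℕ → ℝ) (n j : ℕ) (hj : 2 ≤ j) : bk θ τ n j = 0 := by
  unfold bk
  split_ifs with h1 h2 h3 h4 <;> first | rfl | omega

lemma bk0_pos (θ : ℝ) (hθ : 1 / 2 ≤ θ) (N : ℕ) (τ : ℕ → ℝ)
    (hτ : ∀ k, 1 ≤ k → k ≤ N → 0 < τ k) (k : ℕ) (hk : 1 ≤ k) (hkN : k ≤ N) :
    0 < bk θ τ k 0 := by
  unfold bk
  rcases eq_or_ne k 1 with rfl | h1
  · rw [if_pos rfl, if_pos rfl]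
    have := hτ 1 le_rfl hkN
    positivity
  · rw [if_neg h1, if_pos rfl]
    have hk2 : 2 ≤ k := by omega
    have ht : 0 < τ k := hτ k hk hkN
    have ht' : 0 < τ (k - 1) := hτ (k - 1) (by omega) (by omega)
    have hr : 0 < rr τ k := div_pos ht ht'
    apply div_pos
    · nlinarith
    · positivity

lemma dk_succ (θ : ℝ) (τ : ℕ → ℝ) (n : ℕ) (hb : bk θ τ n 0 ≠ 0) (m : ℕ) :
    bk θ τ n 0 * dk θ τ n (m + 1) = -(bk θ τ n 1) * dk θ τ (n - 1) m := by
  induction m with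
  | zero =>
      show bk θ τ n 0 * (-(bk θ τ (n - 0) 1 / bk θ τ (n - 0 - 1) 0) * dk θ τ n 0)
        = -(bk θ τ n 1) * dk θ τ (n - 1) 0
      show bk θ τ n 0 * (-(bk θ τ (n - 0) 1 / bk θ τ (n - 0 - 1) 0) * (1 / bk θ τ n 0))
        = -(bk θ τ n 1) * (1 / bk θ τ (n - 1) 0)
      simp only [Nat.sub_zero]
      rw [div_eq_mul_one_div (bk θ τ n 1)]
      field_simp
  | succ m ih =>
      have e1 : dk θ τ n (m + 1 + 1)
          = -(bk θ τ (n - (m+1)) 1 / bk θ τ (n - (m+1) - 1) 0) * dk θ τ n (m + 1) := rfl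
      have e2 : dk θ τ (n - 1) (m + 1)
          = -(bk θ τ (n - 1 - m) 1 / bk θ τ (n - 1 - m - 1) 0) * dk θ τ (n - 1) m := rfl
      have h3 : n - (m + 1) = n - 1 - m := by omega
      rw [e1, e2, h3]
      linear_combination (-(bk θ τ (n - 1 - m) 1 / bk θ τ (n - 1 - m - 1) 0)) * ih

/-- If the WSBDF2 convolution kernels are positive semi-definite, i.e.
`∑_{k=1}^n w_k ∑_{j=1}^k b_{k−j}^{(k)} w_j ≥ 0` for every real sequence `w`, then the DOC
kernels are also positive semi-definite:
`∑_{k=1}^n w_k ∑_{j=1}^k d_{k−j}^{(k)} w_j ≥ 0` for every real sequence `w`. -/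
theorem doc_kernels_psd_of_wsbdf2_psd
    (θ : ℝ) (hθ : 1 / 2 ≤ θ ∧ θ ≤ 1)
    (N : ℕ) (hN : 1 ≤ N)
    (τ : ℕ → ℝ) (hτ : ∀ k, 1 ≤ k → k ≤ N → 0 < τ k)
    (n : ℕ) (hn : 1 ≤ n) (hnN : n ≤ N)
    (hpsd : ∀ w : ℕ → ℝ,
      0 ≤ ∑ k ∈ Finset.Icc 1 n, w k * ∑ j ∈ Finset.Icc 1 k, bk θ τ k (k - j) * w j)
    (w : ℕ → ℝ) :
    0 ≤ ∑ k ∈ Finset.Icc 1 n, w k * ∑ j ∈ Finset.Icc 1 k, dk θ τ k (k - j) * w j := by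
  set v : ℕ → ℝ := fun j => ∑ i ∈ Finset.Icc 1 j, dk θ τ j (j - i) * w i with hv
  have hb0 : ∀ k, 1 ≤ k → k ≤ N → bk θ τ k 0 ≠ 0 :=
    fun k hk hkN => (bk0_pos θ hθ.1 N τ hτ k hk hkN).ne'
  -- the inversion identity
  have hinv : ∀ k, 1 ≤ k → k ≤ N →
      ∑ j ∈ Finset.Icc 1 k, bk θ τ k (k - j) * v j = w k := by
    intro k hk1 hkN
    match k, hk1 with
    | 1, _ =>
        have hb := hb0 1 le_rfl hkN
        have hd : dk θ τ 1 0 = 1 / bk θ τ 1 0 := rfl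
        simp only [Finset.Icc_self, Finset.sum_singleton, Nat.sub_self, hv, hd]
        field_simp
    | (m + 2), _ =>
        have hkN' : m + 1 ≤ N := by omega
        have hb := hb0 (m + 2) (by omega) hkN
        -- split top two terms
        rw [Finset.sum_Icc_succ_top (by omega : 1 ≤ m + 2),
            Finset.sum_Icc_succ_top (by omega : 1 ≤ m + 1)]
        have hz : ∑ j ∈ Finset.Icc 1 m, bk θ τ (m + 2) (m + 2 - j) * v j = 0 := by
          apply Finset.sum_eq_zero
          intro j hj
          rw [Finset.mem_Icc] at hj
          rw [bk_eq_zero θ τ (m + 2) (m + 2 - j) (by omega)]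
          ring
        rw [hz, zero_add]
        have e1 : m + 2 - (m + 1) = 1 := by omega
        have e2 : m + 2 - (m + 2) = 0 := by omega
        rw [e1, e2]
        -- compute bk (m+2) 0 * v (m+2)
        have hvK : bk θ τ (m + 2) 0 * v (m + 2)
            = w (m + 2) - bk θ τ (m + 2) 1 * v (m + 1) := by
          have hsplit : v (m + 2) = (∑ i ∈ Finset.Icc 1 (m + 1),
              dk θ τ (m + 2) (m + 2 - i) * w i) + dk θ τ (m + 2) 0 * w (m + 2) := by
            simp only [hv]
            rw [Finset.sum_Icc_succ_top (by omega : 1 ≤ m + 2)]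
            simp
          rw [hsplit, mul_add, Finset.mul_sum]
          have hterm : ∀ i ∈ Finset.Icc 1 (m + 1),
              bk θ τ (m + 2) 0 * (dk θ τ (m + 2) (m + 2 - i) * w i)
                = -(bk θ τ (m + 2) 1) * (dk θ τ (m + 1) (m + 1 - i) * w i) := by
            intro i hi
            rw [Finset.mem_Icc] at hi
            have : m + 2 - i = (m + 1 - i) + 1 := by omega
            rw [this, ← mul_assoc, dk_succ θ τ (m + 2) hb (m + 1 - i)]
            have : m + 2 - 1 = m + 1 := by omega
            rw [this, mul_assoc]
          rw [Finset.sum_congr rfl hterm]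
          have hd0 : bk θ τ (m + 2) 0 * (dk θ τ (m + 2) 0 * w (m + 2)) = w (m + 2) := by
            have hd : dk θ τ (m + 2) 0 = 1 / bk θ τ (m + 2) 0 := rfl
            rw [hd]; field_simp
          rw [hd0, ← Finset.mul_sum]
          simp only [hv]
          ring
        linarith [hvK]
  -- conclude
  have h1 : ∑ k ∈ Finset.Icc 1 n, w k * ∑ j ∈ Finset.Icc 1 k, dk θ τ k (k - j) * w j
      = ∑ k ∈ Finset.Icc 1 n, v k * ∑ j ∈ Finset.Icc 1 k, bk θ τ k (k - j) * v j := by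
    apply Finset.sum_congr rfl
    intro k hk
    rw [Finset.mem_Icc] at hk
    rw [hinv k hk.1 (le_trans hk.2 hnN)]
    simp only [hv]
    ring
  rw [h1]
  exact hpsd v
end

section
/- For every 1 ≤ n ≤ N, the DOC kernels satisfy ∑_{j=1}^n d_{n−j}^{(n)} = τ_n, and consequently ∑_{k=1}^n ∑_{j=1}^k d_{k−j}^{(k)} = t_n, where t_n = τ_1 + ⋯ + τ_n. -/
open Finset

/-- For every `1 ≤ n ≤ N`, the DOC kernels satisfy
`∑_{j=1}^n d_{n−j}^{(n)} = τ_n`, and consequently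
`∑_{k=1}^n ∑_{j=1}^k d_{k−j}^{(k)} = t_n = τ_1 + ⋯ + τ_n`. -/
theorem doc_kernels_row_sum
    (θ : ℝ) (hθ : 1 / 2 ≤ θ ∧ θ ≤ 1)
    (N : ℕ) (hN : 1 ≤ N)
    (τ : ℕ → ℝ) (hτ : ∀ k, 1 ≤ k → k ≤ N → 0 < τ k) :
    ∀ n, 1 ≤ n → n ≤ N →
      (∑ j ∈ Finset.Icc 1 n, dk θ τ n (n - j) = τ n) ∧
      (∑ k ∈ Finset.Icc 1 n, ∑ j ∈ Finset.Icc 1 k, dk θ τ k (k - j) =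
        ∑ k ∈ Finset.Icc 1 n, τ k) := by
  obtain ⟨hθ1, hθ2⟩ := hθ
  have hrpos : ∀ k, 2 ≤ k → k ≤ N → 0 < rr τ k := by
    intro k h2 hk
    exact div_pos (hτ k (by omega) hk) (hτ (k - 1) (by omega) (by omega))
  have hb0pos : ∀ k, 1 ≤ k → k ≤ N → 0 < bk θ τ k 0 := by
    intro k h1 hk
    rcases eq_or_lt_of_le h1 with h | h
    · have := hτ 1 le_rfl hN
      have hk1 : k = 1 := h.symm
      subst hk1
      simp only [bk, if_pos rfl]
      exact div_pos one_pos this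
    · have hk2 : 2 ≤ k := h
      have hr := hrpos k hk2 hk
      have hτk := hτ k (by omega) hk
      simp only [bk, if_neg (by omega : ¬ k = 1), if_pos rfl]
      apply div_pos
      · nlinarith
      · nlinarith
  have hA : ∀ j, 2 ≤ j → j ≤ N →
      bk θ τ j 0 * τ j + bk θ τ j 1 * τ (j - 1) = 1 := by
    intro j h2 hj
    have ha : (0:ℝ) < τ (j - 1) := hτ _ (by omega) (by omega)
    have hb : (0:ℝ) < τ j := hτ _ (by omega) hj
    have h1r : (0:ℝ) < 1 + rr τ j := by
      have := hrpos j h2 hj; linarith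
    simp only [bk, rr, if_neg (by omega : ¬ j = 1)] at *
    norm_num
    field_simp
    ring
  have key : ∀ n, 1 ≤ n → n ≤ N → ∑ j ∈ Finset.Icc 1 n, dk θ τ n (n - j) = τ n := by
    intro n hn1 hnN
    have hB : ∀ p, 2 ≤ p → p ≤ n →
        dk θ τ n (n - p + 1) * bk θ τ (p - 1) 0
          = -(bk θ τ p 1 * dk θ τ n (n - p)) := by
      intro p h2 hp
      have h0 : bk θ τ (p - 1) 0 ≠ 0 := (hb0pos (p - 1) (by omega) (by omega)).ne'
      rw [dk, show n - (n - p) = p from by omega]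
      field_simp
    rcases eq_or_lt_of_le hn1 with h | h
    · have hτ1 : τ 1 ≠ 0 := (hτ 1 le_rfl hN).ne'
      simp [← h, dk, bk, hτ1]
    · have hn2 : 2 ≤ n := h
      have main : ∀ q, q ≤ n - 2 →
          ∑ j ∈ Finset.Icc (n - q) n, dk θ τ n (n - j)
            = τ n - dk θ τ n (q + 1) * (bk θ τ (n - q - 1) 0 * τ (n - q - 1)) := by
        intro q
        induction q with
        | zero =>
          intro _
          simp only [Nat.sub_zero]
          rw [Finset.Icc_self, Finset.sum_singleton, Nat.sub_self]
          have hBn := hB n hn2 le_rfl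
          rw [Nat.sub_self] at hBn
          have hAn := hA n hn2 hnN
          have hd0 : dk θ τ n 0 * bk θ τ n 0 = 1 := by
            rw [dk, one_div, inv_mul_cancel₀ (hb0pos n hn1 hnN).ne']
          linear_combination (τ (n-1)) * hBn - (dk θ τ n 0) * hAn + (τ n) * hd0
        | succ q ih =>
          intro hq
          have hprev := ih (by omega)
          have hins : Finset.Icc (n - (q + 1)) n
              = insert (n - (q + 1)) (Finset.Icc (n - q) n) := by
            ext x; simp only [Finset.mem_Icc, Finset.mem_insert]; omega
          rw [hins, Finset.sum_insert (by simp only [Finset.mem_Icc]; omega), hprev,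
            show n - (n - (q + 1)) = q + 1 from by omega]
          have hAj := hA (n - q - 1) (by omega) (by omega)
          have hBq := hB (n - q - 1) (by omega) (by omega)
          rw [show n - q - 1 - 1 = n - q - 2 from by omega] at hBq hAj
          rw [show n - (n - q - 1) = q + 1 from by omega] at hBq
          rw [show n - (q + 1) - 1 = n - q - 2 from by omega]
          linear_combination (-(dk θ τ n (q + 1))) * hAj + (τ (n - q - 2)) * hBq
      have hfin := main (n - 2) le_rfl
      rw [show n - (n - 2) = 2 from by omega, show n - 2 + 1 = n - 1 from by omega] at hfin
      norm_num at hfin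
      have hins : Finset.Icc 1 n = insert 1 (Finset.Icc 2 n) := by
        ext x; simp only [Finset.mem_Icc, Finset.mem_insert]; omega
      rw [hins, Finset.sum_insert (by simp only [Finset.mem_Icc]; omega), hfin]
      have hb1 : bk θ τ 1 0 * τ 1 = 1 := by
        have hτ1 : τ 1 ≠ 0 := (hτ 1 le_rfl hN).ne'
        simp [bk, hτ1]
      rw [hb1]
      ring
  intro n hn1 hnN
  refine ⟨key n hn1 hnN, ?_⟩
  refine Finset.sum_congr rfl ?_
  intro k hk
  rw [Finset.mem_Icc] at hk
  exact key k hk.1 (hk.2.trans hnN)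
end

section
/- For all 1 ≤ k ≤ n ≤ N, the DOC kernels have the explicit formula d_{n−k}^{(n)} = (1/b_0^{(k)}) · ∏_{i=k+1}^n (2θ − 1) r_i² / (1 + 2θ r_i) (the empty product for k = n being 1). -/
open Finset

lemma doc_aux (θ : ℝ) (hθ : 1 / 2 ≤ θ)
    (N : ℕ)
    (τ : ℕ → ℝ) (hτ : ∀ k, 1 ≤ k → k ≤ N → 0 < τ k)
    (n : ℕ) (hn : 1 ≤ n) (hnN : n ≤ N) :
    ∀ m, m + 1 ≤ n → dk θ τ n m = (1 / bk θ τ (n - m) 0) *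
      ∏ i ∈ Finset.Icc (n - m + 1) n, (2 * θ - 1) * (rr τ i) ^ 2 / (1 + 2 * θ * rr τ i) := by
  intro m
  induction m with
  | zero =>
    intro _
    simp [dk, Finset.Icc_eq_empty_of_lt (Nat.lt_succ_self n)]
  | succ m ih =>
    intro hm
    rw [dk, ih (by omega)]
    set K := n - m - 1 with hKdef
    have hK1 : 1 ≤ K := by omega
    have hnm : n - m = K + 1 := by omega
    have hKn : K + 1 ≤ n := by omega
    rw [hnm]
    rw [show n - (m + 1) = K by omega]
    have hτK : 0 < τ K := hτ K hK1 (by omega)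
    have hτK1 : 0 < τ (K + 1) := hτ (K + 1) (by omega) (by omega)
    have hrr : rr τ (K + 1) = τ (K + 1) / τ K := by simp [rr]
    have hr : 0 < rr τ (K + 1) := by rw [hrr]; positivity
    have h1 : (0:ℝ) < 1 + 2 * θ * rr τ (K + 1) := by nlinarith
    have h2 : (0:ℝ) < 1 + rr τ (K + 1) := by linarith
    have hsplit : Finset.Icc (K + 1) n = insert (K + 1) (Finset.Icc (K + 2) n) := by
      ext x; simp only [Finset.mem_Icc, Finset.mem_insert]; omega
    rw [hsplit, Finset.prod_insert (by simp)]
    have hb0 : bk θ τ (K + 1) 0 = (1 + 2 * θ * rr τ (K + 1)) / (τ (K + 1) * (1 + rr τ (K + 1))) := by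
      simp [bk, Nat.succ_ne_succ, show K + 1 ≠ 1 by omega, show K ≠ 0 by omega]
    have hb1 : bk θ τ (K + 1) 1 = (1 - 2 * θ) * (rr τ (K + 1)) ^ 2 / (τ (K + 1) * (1 + rr τ (K + 1))) := by
      simp [bk, show K + 1 ≠ 1 by omega, show K ≠ 0 by omega]
    have key : -(bk θ τ (K + 1) 1) / bk θ τ (K + 1) 0
        = (2 * θ - 1) * (rr τ (K + 1)) ^ 2 / (1 + 2 * θ * rr τ (K + 1)) := by
      have e1 : (1 + 2 * θ * rr τ (K + 1)) ≠ 0 := ne_of_gt h1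
      have e2 : (1 + rr τ (K + 1)) ≠ 0 := ne_of_gt h2
      have e3 : τ (K + 1) ≠ 0 := ne_of_gt hτK1
      rw [hb0, hb1]
      field_simp
      ring
    calc -(bk θ τ (K + 1) 1 / bk θ τ K 0) *
          (1 / bk θ τ (K + 1) 0 * ∏ i ∈ Finset.Icc (K + 2) n,
            (2 * θ - 1) * rr τ i ^ 2 / (1 + 2 * θ * rr τ i))
        = 1 / bk θ τ K 0 * ((-(bk θ τ (K + 1) 1) / bk θ τ (K + 1) 0) *
            ∏ i ∈ Finset.Icc (K + 2) n,
              (2 * θ - 1) * rr τ i ^ 2 / (1 + 2 * θ * rr τ i)) := by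
          ring
      _ = _ := by rw [key]

/-- For all `1 ≤ k ≤ n ≤ N`, the DOC kernels have the explicit formula
`d_{n−k}^{(n)} = (1/b_0^{(k)}) · ∏_{i=k+1}^n (2θ − 1) r_i² / (1 + 2θ r_i)`. -/
theorem doc_kernels_explicit_formula
    (θ : ℝ) (hθ : 1 / 2 ≤ θ ∧ θ ≤ 1)
    (N : ℕ) (hN : 1 ≤ N)
    (τ : ℕ → ℝ) (hτ : ∀ k, 1 ≤ k → k ≤ N → 0 < τ k)
    (n : ℕ) (hn : 1 ≤ n) (hnN : n ≤ N)
    (k : ℕ) (hk : 1 ≤ k) (hkn : k ≤ n) :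
    dk θ τ n (n - k) = (1 / bk θ τ k 0) *
      ∏ i ∈ Finset.Icc (k + 1) n, (2 * θ - 1) * (rr τ i) ^ 2 / (1 + 2 * θ * rr τ i) := by
  have h := doc_aux θ hθ.1 N τ hτ n hn hnN (n - k) (by omega)
  rw [h, show n - (n - k) = k by omega]
end

section
/- For θ ∈ [1/2, 1] and arbitrary positive steps τ_1, …, τ_N, the DOC kernels satisfy d_{k−1}^{(k)} ≤ τ_k / 2^{k−1} for every 1 ≤ k ≤ n, and consequently ∑_{k=1}^n d_{k−1}^{(k)} ≤ 2 τ_max, where τ_max := max_{1 ≤ k ≤ N} τ_k. -/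
open Finset

lemma dk_eq_prod (θ : ℝ) (τ : ℕ → ℝ) (n : ℕ) : ∀ m,
    dk θ τ n m =
      (∏ i ∈ Finset.range m, -(bk θ τ (n - i) 1 / bk θ τ (n - i - 1) 0)) / bk θ τ n 0
  | 0 => by simp [dk]
  | m + 1 => by
    rw [dk, dk_eq_prod θ τ n m, Finset.prod_range_succ]; ring

lemma dk_shift (θ : ℝ) (τ : ℕ → ℝ) (m : ℕ) :
    dk θ τ (m + 2) (m + 1) =
      -(bk θ τ (m + 2) 1 / bk θ τ (m + 2) 0) * dk θ τ (m + 1) m := by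
  rw [dk_eq_prod, dk_eq_prod, Finset.prod_range_succ']
  have h : ∀ i ∈ Finset.range m,
      -(bk θ τ (m + 2 - (i + 1)) 1 / bk θ τ (m + 2 - (i + 1) - 1) 0) =
      -(bk θ τ (m + 1 - i) 1 / bk θ τ (m + 1 - i - 1) 0) := by
    intro i _
    congr 3 <;> omega
  rw [Finset.prod_congr rfl h]
  norm_num
  ring

lemma dk_bound (θ : ℝ) (hθ1 : 1 / 2 ≤ θ) (hθ2 : θ ≤ 1) (N : ℕ) (τ : ℕ → ℝ)
    (hτ : ∀ k, 1 ≤ k → k ≤ N → 0 < τ k) :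
    ∀ k, 1 ≤ k → k ≤ N →
      0 ≤ dk θ τ k (k - 1) ∧ dk θ τ k (k - 1) ≤ τ k / 2 ^ (k - 1) := by
  intro k
  induction k with
  | zero => intro h; omega
  | succ k ih =>
    intro _ hkN
    rcases Nat.eq_zero_or_pos k with rfl | hk1
    · have h1 : (0:ℝ) < τ 1 := hτ 1 le_rfl hkN
      have : dk θ τ 1 0 = τ 1 := by simp [dk, bk]
      simp [this]
      exact h1.le
    · obtain ⟨m, rfl⟩ : ∃ m, k = m + 1 := ⟨k - 1, by omega⟩
      obtain ⟨ih0, ih1⟩ := ih (by omega) (by omega)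
      have hτ1 : (0:ℝ) < τ (m + 1) := hτ (m + 1) (by omega) (by omega)
      have hτ2 : (0:ℝ) < τ (m + 2) := hτ (m + 2) (by omega) hkN
      have hr : (0:ℝ) < rr τ (m + 2) := by
        have : (m + 2 : ℕ) - 1 = m + 1 := by omega
        rw [rr, this]
        positivity
      set r := rr τ (m + 2) with hrdef
      have hrτ : r * τ (m + 1) = τ (m + 2) := by
        rw [hrdef, rr, show (m + 2 : ℕ) - 1 = m + 1 from by omega,
          div_mul_cancel₀ _ (ne_of_gt hτ1)]
      have hden : (0:ℝ) < 1 + 2 * θ * r := by nlinarith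
      have h1r : (0:ℝ) < 1 + r := by linarith
      have hne1 : τ (m + 2) * (1 + r) ≠ 0 := mul_ne_zero hτ2.ne' h1r.ne'
      have hne2 : (1 + 2 * θ * r) ≠ 0 := hden.ne'
      have hc : -(bk θ τ (m + 2) 1 / bk θ τ (m + 2) 0) =
          (2 * θ - 1) * r ^ 2 / (1 + 2 * θ * r) := by
        rw [bk, bk]
        norm_num [show (m + 2 : ℕ) ≠ 1 from by omega, ← hrdef]
        field_simp
        ring
      have hc0 : 0 ≤ (2 * θ - 1) * r ^ 2 / (1 + 2 * θ * r) := by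
        apply div_nonneg _ hden.le
        nlinarith
      have hc2 : (2 * θ - 1) * r ^ 2 / (1 + 2 * θ * r) ≤ r / 2 := by
        rw [div_le_div_iff₀ hden (by norm_num)]
        nlinarith
      have heq : dk θ τ (m + 2) (m + 1) =
          ((2 * θ - 1) * r ^ 2 / (1 + 2 * θ * r)) * dk θ τ (m + 1) m := by
        rw [dk_shift, hc]
      have hm : (m + 1 : ℕ) - 1 = m := by omega
      rw [hm] at ih0 ih1
      constructor
      · rw [show (m + 2 : ℕ) - 1 = m + 1 from by omega, heq]
        exact mul_nonneg hc0 ih0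
      · rw [show (m + 2 : ℕ) - 1 = m + 1 from by omega, heq]
        calc ((2 * θ - 1) * r ^ 2 / (1 + 2 * θ * r)) * dk θ τ (m + 1) m
            ≤ (r / 2) * (τ (m + 1) / 2 ^ m) :=
              mul_le_mul hc2 ih1 ih0 (by positivity)
          _ = τ (m + 2) / 2 ^ (m + 1) := by
              rw [← hrτ, pow_succ]; ring

/-- For `θ ∈ [1/2, 1]` and arbitrary positive steps `τ_1, …, τ_N`, the DOC
kernels satisfy `d_{k−1}^{(k)} ≤ τ_k / 2^{k−1}` for every `1 ≤ k ≤ n`, and consequently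
`∑_{k=1}^n d_{k−1}^{(k)} ≤ 2 τ_max`, where `τ_max = max_{1 ≤ k ≤ N} τ_k`. -/
theorem doc_first_column_bound
    (θ : ℝ) (hθ : 1 / 2 ≤ θ ∧ θ ≤ 1)
    (N : ℕ) (hN : 1 ≤ N)
    (τ : ℕ → ℝ) (hτ : ∀ k, 1 ≤ k → k ≤ N → 0 < τ k)
    (n : ℕ) (hn : 1 ≤ n) (hnN : n ≤ N) :
    (∀ k, 1 ≤ k → k ≤ n → dk θ τ k (k - 1) ≤ τ k / 2 ^ (k - 1)) ∧
    ∑ k ∈ Finset.Icc 1 n, dk θ τ k (k - 1) ≤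
      2 * (Finset.Icc 1 N).sup' (Finset.nonempty_Icc.mpr hN) τ := by
  obtain ⟨hθ1, hθ2⟩ := hθ
  have key := dk_bound θ hθ1 hθ2 N τ hτ
  constructor
  · intro k hk hkn
    exact (key k hk (le_trans hkn hnN)).2
  · set M := (Finset.Icc 1 N).sup' (Finset.nonempty_Icc.mpr hN) τ with hM
    have hsup : ∀ k, 1 ≤ k → k ≤ N → τ k ≤ M := fun k hk hkN =>
      Finset.le_sup' τ (Finset.mem_Icc.mpr ⟨hk, hkN⟩)
    have hM0 : 0 ≤ M := le_trans (hτ 1 le_rfl hN).le (hsup 1 le_rfl hN)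
    calc ∑ k ∈ Finset.Icc 1 n, dk θ τ k (k - 1)
        ≤ ∑ k ∈ Finset.Icc 1 n, M * (1 / 2 : ℝ) ^ (k - 1) := by
          apply Finset.sum_le_sum
          intro k hkmem
          obtain ⟨hk1, hk2⟩ := Finset.mem_Icc.mp hkmem
          have hkN : k ≤ N := le_trans hk2 hnN
          calc dk θ τ k (k - 1) ≤ τ k / 2 ^ (k - 1) := (key k hk1 hkN).2
            _ ≤ M / 2 ^ (k - 1) := by
                gcongr
                exact hsup k hk1 hkN
            _ = M * (1 / 2 : ℝ) ^ (k - 1) := by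
                rw [div_pow, one_pow]; ring
      _ = M * ∑ k ∈ Finset.Icc 1 n, (1 / 2 : ℝ) ^ (k - 1) := by
          rw [Finset.mul_sum]
      _ ≤ M * 2 := by
          apply mul_le_mul_of_nonneg_left _ hM0
          rw [show Finset.Icc 1 n = Finset.Ico 1 (n + 1) by rw [Finset.Ico_add_one_right_eq_Icc],
            Finset.sum_Ico_eq_sum_range]
          have hcg : ∀ i ∈ Finset.range (n + 1 - 1), (1 / 2 : ℝ) ^ (1 + i - 1) = (1 / 2 : ℝ) ^ i :=
            fun i _ => by congr 1; omega
          rw [Finset.sum_congr rfl hcg]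
          simpa using sum_geometric_two_le n
      _ = 2 * M := by ring
end

section
/- Let θ ∈ (1/2, 1] and suppose all ratios r_2, …, r_{N+1} satisfy 0 < r_k ≤ r_s, where r_s is the unique positive root of (1 − 2θ)² r³ − 4θ² r² − 4θ r − 1 = 0. Define the discrete energies E^0 := ⟨A u^0, u^0⟩ and, for k ≥ 1, E^k := ((2θ − 1) r_{k+1}^{3/2}/(1 + r_{k+1})) · τ_k · ‖(u^k − u^{k−1})/τ_k‖² + ⟨A u^k, u^k⟩. Then the WSBDF2 solution satisfies the discrete energy dissipation law (E^k − E^{k−1})/τ_k ≤ 2 ⟨θ f^k + (1 − θ) f^{k−1}, (u^k − u^{k−1})/τ_k⟩ for every 1 ≤ k ≤ N. In particular, if f^k = 0 for all k, then E^k ≤ E^{k−1} for all k ≥ 1. -/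
open Finset

open scoped RealInnerProductSpace

private lemma t_gt_two {a t : ℝ} (ha : 0 < a) (ha1 : a ≤ 1) (ht0 : 0 < t)
    (ht : a * t ^ 3 = (a + 1) * t ^ 2 + 1) : 2 < t := by
  by_contra hc
  push_neg at hc
  nlinarith [mul_pos ht0 ht0, mul_nonneg (sub_nonneg.2 hc) (mul_pos ht0 ht0).le,
    mul_nonneg (sub_nonneg.2 ha1) (mul_pos ht0 ht0).le]

private lemma cube_mono {a q t : ℝ} (ha : 0 < a) (hq : 0 ≤ q) (hqt : q ≤ t) :
    a * q ^ 3 * (1 + t ^ 2) ≤ a * t ^ 3 * (1 + q ^ 2) := by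
  have h0 : (0:ℝ) ≤ t ^ 2 + t * q + q ^ 2 + q ^ 2 * t ^ 2 := by
    have := mul_nonneg (hq.trans hqt) hq
    nlinarith [sq_nonneg q, sq_nonneg t, sq_nonneg (q*t)]
  nlinarith [mul_nonneg ha.le (mul_nonneg (sub_nonneg.2 hqt) h0)]

private lemma key_scalar {a p q t : ℝ} (ha : 0 < a) (ha1 : a ≤ 1) (hp : 0 < p)
    (hpt : p ≤ t) (hq : 0 < q) (hqt : q ≤ t)
    (ht : a * t ^ 3 = (a + 1) * t ^ 2 + 1) :
    a * p ^ 3 + a * q ^ 3 * (1 + p ^ 2) / (1 + q ^ 2) ≤ 2 * (1 + (a + 1) * p ^ 2) := by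
  have ht0 : 0 < t := lt_of_lt_of_le hp hpt
  have h2 : 2 < t := t_gt_two ha ha1 ht0 ht
  have hq2 : (0:ℝ) < 1 + q ^ 2 := by positivity
  have ht2 : (0:ℝ) < 1 + t ^ 2 := by positivity
  have hmono : a * q ^ 3 * (1 + p ^ 2) / (1 + q ^ 2) ≤ a * t ^ 3 * (1 + p ^ 2) / (1 + t ^ 2) := by
    rw [div_le_div_iff₀ hq2 ht2]
    have hcm := cube_mono ha hq.le hqt
    nlinarith [mul_le_mul_of_nonneg_right hcm (by positivity : (0:ℝ) ≤ 1 + p ^ 2)]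
  have h2' : (0:ℝ) ≤ t - 2 := by linarith
  have hQ : (0:ℝ) ≤ (1 + t ^ 2) * p ^ 2 + (t - 2) * p + t * (t - 2) :=
    add_nonneg (add_nonneg (by positivity) (mul_nonneg h2' hp.le)) (mul_nonneg ht0.le h2')
  have hz : a * t ^ 3 - (a + 1) * t ^ 2 - 1 = 0 := by linarith
  have hExpr : 0 ≤ 2 * (1 + (a + 1) * p ^ 2) * (1 + t ^ 2) - a * t ^ 3 * (1 + p ^ 2)
      - a * p ^ 3 * (1 + t ^ 2) := by
    have hfact : 2 * (1 + (a + 1) * p ^ 2) * (1 + t ^ 2) - a * t ^ 3 * (1 + p ^ 2)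
        - a * p ^ 3 * (1 + t ^ 2)
        = a * (t - p) * ((1 + t ^ 2) * p ^ 2 + (t - 2) * p + t * (t - 2))
          - 2 * (1 + p ^ 2) * (a * t ^ 3 - (a + 1) * t ^ 2 - 1) := by ring
    rw [hfact, hz, mul_zero, sub_zero]
    exact mul_nonneg (mul_nonneg ha.le (by linarith)) hQ
  have hlast : a * t ^ 3 * (1 + p ^ 2) / (1 + t ^ 2) ≤ 2 * (1 + (a + 1) * p ^ 2) - a * p ^ 3 := by
    rw [div_le_iff₀ ht2]; linarith
  linarith

private lemma key_quad {a p q t X Y : ℝ} (ha : 0 < a) (ha1 : a ≤ 1) (hp : 0 < p)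
    (hpt : p ≤ t) (hq : 0 < q) (hqt : q ≤ t)
    (ht : a * t ^ 3 = (a + 1) * t ^ 2 + 1) :
    2 * (a * p ^ 4) * (Y * X) ≤
      (2 * (1 + (a + 1) * p ^ 2) - a * q ^ 3 * (1 + p ^ 2) / (1 + q ^ 2)) * X ^ 2
        + a * p ^ 5 * Y ^ 2 := by
  have hk := key_scalar ha ha1 hp hpt hq hqt ht
  have h1 : 0 ≤ (2 * (1 + (a + 1) * p ^ 2) - a * q ^ 3 * (1 + p ^ 2) / (1 + q ^ 2))
      - a * p ^ 3 := by linarith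
  nlinarith [mul_nonneg h1 (sq_nonneg X),
    mul_nonneg (mul_nonneg ha.le (pow_pos hp 3).le) (sq_nonneg (X - p * Y))]

private lemma c_le_two {a q t : ℝ} (ha : 0 < a) (ha1 : a ≤ 1) (hq : 0 < q) (hqt : q ≤ t)
    (ht : a * t ^ 3 = (a + 1) * t ^ 2 + 1) :
    a * q ^ 3 / (1 + q ^ 2) ≤ 2 := by
  have ht0 : 0 < t := lt_of_lt_of_le hq hqt
  rw [div_le_iff₀ (by positivity)]
  have hm := cube_mono ha hq.le hqt
  have h2 : a * t ^ 3 ≤ 2 * (1 + t ^ 2) := by nlinarith [sq_nonneg t]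
  have ht2 : (0:ℝ) < 1 + t ^ 2 := by positivity
  nlinarith [mul_le_mul_of_nonneg_right h2 (by positivity : (0:ℝ) ≤ 1 + q ^ 2), hm, ht2]

private lemma rpow32 {r : ℝ} (hr : 0 ≤ r) : r ^ ((3 : ℝ) / 2) = Real.sqrt r ^ 3 := by
  rw [show ((3:ℝ)/2) = (1/2 : ℝ) * 3 by norm_num, Real.rpow_mul hr, ← Real.sqrt_eq_rpow,
    show (3:ℝ) = ((3:ℕ):ℝ) by norm_num, Real.rpow_natCast]

private lemma quadA {H : Type*} [NormedAddCommGroup H] [InnerProductSpace ℝ H]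
    (A : H →L[ℝ] H) (hsa : ∀ x y : H, ⟪A x, y⟫ = ⟪x, A y⟫) (θ : ℝ) (x y : H) :
    2 * ⟪A (θ • x + (1 - θ) • y), x - y⟫ =
      ⟪A x, x⟫ - ⟪A y, y⟫ + (2 * θ - 1) * ⟪A (x - y), x - y⟫ := by
  have h1 : ⟪A x, y⟫ = ⟪A y, x⟫ := by rw [hsa x y, real_inner_comm]
  simp only [map_add, map_smul, map_sub, inner_add_left, inner_sub_left, inner_sub_right,
    real_inner_smul_left]
  linarith [h1]

set_option maxHeartbeats 1600000 in
/-- discrete energy dissipation law for the WSBDF2 scheme. Let `θ ∈ (1/2, 1]`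
with all ratios `r_2, …, r_{N+1}` in `(0, r_s]` (`r_s` the unique positive root of
`(1 − 2θ)² r³ − 4θ² r² − 4θ r − 1 = 0`). With the discrete energies
`E^0 = ⟨A u^0, u^0⟩` and
`E^k = ((2θ − 1) r_{k+1}^{3/2}/(1 + r_{k+1})) τ_k ‖(u^k − u^{k−1})/τ_k‖² + ⟨A u^k, u^k⟩`,
the WSBDF2 solution satisfies
`(E^k − E^{k−1})/τ_k ≤ 2 ⟨θ f^k + (1 − θ) f^{k−1}, (u^k − u^{k−1})/τ_k⟩` for `1 ≤ k ≤ N`;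
in particular, if `f ≡ 0`, then `E^k ≤ E^{k−1}` for all `1 ≤ k ≤ N`. -/
theorem wsbdf2_energy_dissipation
    {H : Type*} [NormedAddCommGroup H] [InnerProductSpace ℝ H] [CompleteSpace H]
    (A : H →L[ℝ] H)
    (hA_selfadj : ∀ x y : H, ⟪A x, y⟫ = ⟪x, A y⟫)
    (hA_nonneg : ∀ x : H, 0 ≤ ⟪A x, x⟫)
    (θ : ℝ) (hθ : 1 / 2 < θ ∧ θ ≤ 1)
    (N : ℕ) (hN : 1 ≤ N)
    (τ : ℕ → ℝ) (hτ : ∀ k, 1 ≤ k → k ≤ N + 1 → 0 < τ k)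
    (rs : ℝ) (hrs_pos : 0 < rs)
    (hrs_root : (1 - 2 * θ) ^ 2 * rs ^ 3 - 4 * θ ^ 2 * rs ^ 2 - 4 * θ * rs - 1 = 0)
    (hrs_uniq : ∀ r : ℝ, 0 < r →
      (1 - 2 * θ) ^ 2 * r ^ 3 - 4 * θ ^ 2 * r ^ 2 - 4 * θ * r - 1 = 0 → r = rs)
    (hr : ∀ k, 2 ≤ k → k ≤ N + 1 → 0 < rr τ k ∧ rr τ k ≤ rs)
    (u f : ℕ → H)
    (hscheme1 : (τ 1)⁻¹ • (u 1 - u 0) + A (θ • u 1 + (1 - θ) • u 0)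
      = θ • f 1 + (1 - θ) • f 0)
    (hscheme : ∀ n, 2 ≤ n → n ≤ N →
      bk θ τ n 0 • (u n - u (n - 1)) + bk θ τ n 1 • (u (n - 1) - u (n - 2)) +
        A (θ • u n + (1 - θ) • u (n - 1)) = θ • f n + (1 - θ) • f (n - 1))
    (E : ℕ → ℝ)
    (hE0 : E 0 = ⟪A (u 0), u 0⟫)
    (hEk : ∀ k, 1 ≤ k → k ≤ N →
      E k = (2 * θ - 1) * (rr τ (k + 1)) ^ ((3 : ℝ) / 2) / (1 + rr τ (k + 1)) * τ k *
          ‖(τ k)⁻¹ • (u k - u (k - 1))‖ ^ 2 + ⟪A (u k), u k⟫) :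
    (∀ k, 1 ≤ k → k ≤ N →
      (E k - E (k - 1)) / τ k ≤
        2 * ⟪θ • f k + (1 - θ) • f (k - 1), (τ k)⁻¹ • (u k - u (k - 1))⟫) ∧
    ((∀ k, k ≤ N → f k = 0) → ∀ k, 1 ≤ k → k ≤ N → E k ≤ E (k - 1)) := by
  obtain ⟨hθ1, hθ2⟩ := hθ
  have ha : 0 < 2 * θ - 1 := by linarith
  have ha1 : 2 * θ - 1 ≤ 1 := by linarith
  set t := Real.sqrt rs with htdef
  have ht0 : 0 < t := Real.sqrt_pos.2 hrs_pos
  have hts : t ^ 2 = rs := Real.sq_sqrt hrs_pos.le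
  have htroot : (2 * θ - 1) * t ^ 3 = (2 * θ - 1 + 1) * t ^ 2 + 1 := by
    have hsq : ((2 * θ - 1) * t ^ 3) ^ 2 = ((2 * θ - 1 + 1) * t ^ 2 + 1) ^ 2 := by
      have e1 : ((2 * θ - 1) * t ^ 3) ^ 2 = (1 - 2 * θ) ^ 2 * rs ^ 3 := by
        rw [← hts]; ring
      have e2 : ((2 * θ - 1 + 1) * t ^ 2 + 1) ^ 2 = 4 * θ ^ 2 * rs ^ 2 + 4 * θ * rs + 1 := by
        rw [← hts]; ring
      rw [e1, e2]; linarith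
    have hpos1 : 0 < (2 * θ - 1) * t ^ 3 := by positivity
    have hpos2 : 0 < (2 * θ - 1 + 1) * t ^ 2 + 1 := by positivity
    have hfac : ((2 * θ - 1) * t ^ 3 - ((2 * θ - 1 + 1) * t ^ 2 + 1)) *
        ((2 * θ - 1) * t ^ 3 + ((2 * θ - 1 + 1) * t ^ 2 + 1)) = 0 := by
      linear_combination hsq
    rcases mul_eq_zero.1 hfac with h | h
    · linarith
    · exact absurd h (ne_of_gt (by linarith))
  have key : ∀ k, 1 ≤ k → k ≤ N →
      E k - E (k - 1) ≤ 2 * ⟪θ • f k + (1 - θ) • f (k - 1), u k - u (k - 1)⟫ := by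
    intro k hk1 hkN
    have hτk : 0 < τ k := hτ k hk1 (by omega)
    have hτkne : τ k ≠ 0 := hτk.ne'
    obtain ⟨hr'0, hr's⟩ := hr (k + 1) (by omega) (by omega)
    set q := Real.sqrt (rr τ (k + 1)) with hqdef
    have hq0 : 0 < q := Real.sqrt_pos.2 hr'0
    have hq2 : q ^ 2 = rr τ (k + 1) := Real.sq_sqrt hr'0.le
    have hqt : q ≤ t := Real.sqrt_le_sqrt hr's
    have hrpowq : (rr τ (k + 1)) ^ ((3 : ℝ) / 2) = q ^ 3 := rpow32 hr'0.le
    have hQ2 : (1:ℝ) + q ^ 2 ≠ 0 := by positivity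
    rcases Nat.lt_or_ge k 2 with hklt | hk2
    · -- k = 1
      have hk1eq : k = 1 := by omega
      subst hk1eq
      have hgexp : ⟪θ • f 1 + (1 - θ) • f 0, u 1 - u 0⟫ =
          θ * ⟪f 1, u 1 - u 0⟫ + (1 - θ) * ⟪f 0, u 1 - u 0⟫ := by
        simp [inner_add_left, real_inner_smul_left]
      have hsch : (τ 1)⁻¹ * ⟪u 1 - u 0, u 1 - u 0⟫ +
          ⟪A (θ • u 1 + (1 - θ) • u 0), u 1 - u 0⟫ =
          θ * ⟪f 1, u 1 - u 0⟫ + (1 - θ) * ⟪f 0, u 1 - u 0⟫ := by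
        have h := congrArg (fun z => ⟪z, u 1 - u 0⟫) hscheme1
        simp only [inner_add_left, real_inner_smul_left] at h
        exact h
      have hAq := quadA A hA_selfadj θ (u 1) (u 0)
      have hApos := hA_nonneg (u 1 - u 0)
      have hIP : ⟪u 1 - u 0, u 1 - u 0⟫ = ‖u 1 - u 0‖ ^ 2 :=
        real_inner_self_eq_norm_sq _
      rw [hIP] at hsch
      have hE1 := hEk 1 le_rfl hN
      have hnorm : ‖(τ 1)⁻¹ • (u 1 - u 0)‖ ^ 2 = ((τ 1)⁻¹) ^ 2 * ‖u 1 - u 0‖ ^ 2 := by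
        rw [norm_smul, Real.norm_eq_abs, abs_of_pos (inv_pos.2 hτk), mul_pow]
      have hc1 : (2 * θ - 1) * (rr τ (1 + 1)) ^ ((3 : ℝ) / 2) / (1 + rr τ (1 + 1)) ≤ 2 := by
        rw [hrpowq, ← hq2]
        exact c_le_two ha ha1 hq0 hqt htroot
      have hrrpos : (0:ℝ) < 1 + rr τ (1 + 1) := by
        rw [← hq2]; positivity
      have hEeq : E 1 = (2 * θ - 1) * (rr τ (1 + 1)) ^ ((3 : ℝ) / 2) / (1 + rr τ (1 + 1)) *
          ((τ 1)⁻¹ * ‖u 1 - u 0‖ ^ 2) + ⟪A (u 1), u 1⟫ := by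
        rw [hE1, hnorm]
        have h1 : (1:ℝ) + rr τ (1 + 1) ≠ 0 := hrrpos.ne'
        field_simp
      have hcc : (2 * θ - 1) * (rr τ (1 + 1)) ^ ((3 : ℝ) / 2) / (1 + rr τ (1 + 1)) *
          ((τ 1)⁻¹ * ‖u 1 - u 0‖ ^ 2) ≤ 2 * ((τ 1)⁻¹ * ‖u 1 - u 0‖ ^ 2) :=
        mul_le_mul_of_nonneg_right hc1
          (mul_nonneg (inv_pos.2 hτk).le (sq_nonneg _))
      have hip : 0 ≤ (2 * θ - 1) * ⟪A (u 1 - u 0), u 1 - u 0⟫ := mul_nonneg ha.le hApos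
      have hgoal : E 1 - E (1 - 1) ≤
          2 * ⟪θ • f 1 + (1 - θ) • f 0, u 1 - u 0⟫ := by
        rw [show (1:ℕ) - 1 = 0 from rfl, hEeq, hE0, hgexp]
        linarith [hsch, hAq, hip, hcc]
      simpa using hgoal
    · -- k ≥ 2
      obtain ⟨hr0, hrs'⟩ := hr k (by omega) (by omega)
      set p := Real.sqrt (rr τ k) with hpdef
      have hp0 : 0 < p := Real.sqrt_pos.2 hr0
      have hp2 : p ^ 2 = rr τ k := Real.sq_sqrt hr0.le
      have hpt : p ≤ t := Real.sqrt_le_sqrt hrs'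
      have hrpowp : (rr τ k) ^ ((3 : ℝ) / 2) = p ^ 3 := rpow32 hr0.le
      have hτk1 : 0 < τ (k - 1) := hτ (k - 1) (by omega) (by omega)
      have hP2 : (1:ℝ) + p ^ 2 ≠ 0 := by positivity
      have hkne1 : ¬ (k = 1) := by omega
      have hb0 : bk θ τ k 0 = (1 + 2 * θ * rr τ k) / (τ k * (1 + rr τ k)) := by
        simp [bk, hkne1]
      have hb1 : bk θ τ k 1 = (1 - 2 * θ) * (rr τ k) ^ 2 / (τ k * (1 + rr τ k)) := by
        simp [bk, hkne1]
      have hsch : bk θ τ k 0 * ⟪u k - u (k - 1), u k - u (k - 1)⟫ +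
          bk θ τ k 1 * ⟪u (k - 1) - u (k - 2), u k - u (k - 1)⟫ +
          ⟪A (θ • u k + (1 - θ) • u (k - 1)), u k - u (k - 1)⟫ =
          θ * ⟪f k, u k - u (k - 1)⟫ + (1 - θ) * ⟪f (k - 1), u k - u (k - 1)⟫ := by
        have h := congrArg (fun z => ⟪z, u k - u (k - 1)⟫) (hscheme k hk2 hkN)
        simp only [inner_add_left, real_inner_smul_left] at h
        exact h
      rw [hb0, hb1, ← hp2] at hsch
      have hAq := quadA A hA_selfadj θ (u k) (u (k - 1))
      have hApos := hA_nonneg (u k - u (k - 1))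
      have hCS : ⟪u (k - 1) - u (k - 2), u k - u (k - 1)⟫ ≤
          ‖u (k - 1) - u (k - 2)‖ * ‖u k - u (k - 1)‖ := real_inner_le_norm _ _
      have hIP : ⟪u k - u (k - 1), u k - u (k - 1)⟫ = ‖u k - u (k - 1)‖ ^ 2 :=
        real_inner_self_eq_norm_sq _
      rw [hIP] at hsch
      have hnormk : ‖(τ k)⁻¹ • (u k - u (k - 1))‖ ^ 2 =
          ((τ k)⁻¹) ^ 2 * ‖u k - u (k - 1)‖ ^ 2 := by
        rw [norm_smul, Real.norm_eq_abs, abs_of_pos (inv_pos.2 hτk), mul_pow]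
      have hnormk1 : ‖(τ (k - 1))⁻¹ • (u (k - 1) - u (k - 2))‖ ^ 2 =
          ((τ (k - 1))⁻¹) ^ 2 * ‖u (k - 1) - u (k - 2)‖ ^ 2 := by
        rw [norm_smul, Real.norm_eq_abs, abs_of_pos (inv_pos.2 hτk1), mul_pow]
      have hσ : (τ (k - 1))⁻¹ = p ^ 2 * (τ k)⁻¹ := by
        rw [hp2]
        show (τ (k - 1))⁻¹ = τ k / τ (k - 1) * (τ k)⁻¹
        field_simp
      have hEkk : E k = (2 * θ - 1) * q ^ 3 / (1 + q ^ 2) *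
          ((τ k)⁻¹ * ‖u k - u (k - 1)‖ ^ 2) + ⟪A (u k), u k⟫ := by
        rw [hEk k hk1 hkN, hnormk, hrpowq, ← hq2]
        field_simp
      have hEk1 : E (k - 1) = (2 * θ - 1) * p ^ 3 / (1 + p ^ 2) *
          (p ^ 2 * (τ k)⁻¹ * ‖u (k - 1) - u (k - 2)‖ ^ 2) +
          ⟪A (u (k - 1)), u (k - 1)⟫ := by
        have h := hEk (k - 1) (by omega) (by omega)
        rw [show k - 1 + 1 = k from by omega, show k - 1 - 1 = k - 2 from by omega] at h
        have hτeq : τ (k - 1) = τ k / p ^ 2 := by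
          rw [hp2]
          show τ (k - 1) = τ k / (τ k / τ (k - 1))
          field_simp
        rw [h, hnormk1, hrpowp, ← hp2, hσ, hτeq]
        field_simp
      have hquad := key_quad (a := 2*θ-1) (p := p) (q := q) (t := t)
        (X := ‖u k - u (k - 1)‖) (Y := ‖u (k - 1) - u (k - 2)‖)
        ha ha1 hp0 hpt hq0 hqt htroot
      have hneed : 2 * ((2 * θ - 1) * p ^ 4 / (τ k * (1 + p ^ 2))) *
          (‖u (k - 1) - u (k - 2)‖ * ‖u k - u (k - 1)‖) ≤
          (2 * ((1 + 2 * θ * p ^ 2) / (τ k * (1 + p ^ 2)))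
            - (2 * θ - 1) * q ^ 3 / (1 + q ^ 2) * (τ k)⁻¹) * ‖u k - u (k - 1)‖ ^ 2
          + (2 * θ - 1) * p ^ 3 / (1 + p ^ 2) *
            (p ^ 2 * (τ k)⁻¹) * ‖u (k - 1) - u (k - 2)‖ ^ 2 := by
        rw [← sub_nonneg] at hquad ⊢
        have heq : (2 * ((1 + 2 * θ * p ^ 2) / (τ k * (1 + p ^ 2)))
              - (2 * θ - 1) * q ^ 3 / (1 + q ^ 2) * (τ k)⁻¹) * ‖u k - u (k - 1)‖ ^ 2
            + (2 * θ - 1) * p ^ 3 / (1 + p ^ 2) *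
              (p ^ 2 * (τ k)⁻¹) * ‖u (k - 1) - u (k - 2)‖ ^ 2
            - 2 * ((2 * θ - 1) * p ^ 4 / (τ k * (1 + p ^ 2))) *
              (‖u (k - 1) - u (k - 2)‖ * ‖u k - u (k - 1)‖)
            = ((2 * (1 + (2 * θ - 1 + 1) * p ^ 2)
                  - (2 * θ - 1) * q ^ 3 * (1 + p ^ 2) / (1 + q ^ 2)) * ‖u k - u (k - 1)‖ ^ 2
                + (2 * θ - 1) * p ^ 5 * ‖u (k - 1) - u (k - 2)‖ ^ 2
                - 2 * ((2 * θ - 1) * p ^ 4) *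
                  (‖u (k - 1) - u (k - 2)‖ * ‖u k - u (k - 1)‖))
              * ((τ k)⁻¹ * (1 + p ^ 2)⁻¹) := by
          field_simp
          ring
        rw [heq]
        exact mul_nonneg hquad (by positivity)
      have hB1 : 0 ≤ (2 * θ - 1) * p ^ 4 / (τ k * (1 + p ^ 2)) :=
        div_nonneg (mul_nonneg ha.le (by positivity))
          (mul_nonneg hτk.le (by positivity))
      have hB1z := mul_le_mul_of_nonneg_left hCS hB1
      have hip : 0 ≤ (2 * θ - 1) * ⟪A (u k - u (k - 1)), u k - u (k - 1)⟫ :=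
        mul_nonneg ha.le hApos
      rw [hEkk, hEk1]
      have hcoef : (1 - 2 * θ) * (p ^ 2) ^ 2 / (τ k * (1 + p ^ 2)) =
          -((2 * θ - 1) * p ^ 4 / (τ k * (1 + p ^ 2))) := by ring
      rw [hcoef] at hsch
      have hgexp : ⟪θ • f k + (1 - θ) • f (k - 1), u k - u (k - 1)⟫ =
          θ * ⟪f k, u k - u (k - 1)⟫ + (1 - θ) * ⟪f (k - 1), u k - u (k - 1)⟫ := by
        simp [inner_add_left, real_inner_smul_left]
      rw [hgexp]
      linarith [hsch, hAq, hip, hneed, hB1z]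
  refine ⟨?_, ?_⟩
  · intro k hk1 hkN
    have hτk : 0 < τ k := hτ k hk1 (by omega)
    have h := key k hk1 hkN
    rw [real_inner_smul_right, div_le_iff₀ hτk]
    calc E k - E (k - 1) ≤ 2 * ⟪θ • f k + (1 - θ) • f (k - 1), u k - u (k - 1)⟫ := h
      _ = 2 * ((τ k)⁻¹ * ⟪θ • f k + (1 - θ) • f (k - 1), u k - u (k - 1)⟫) * τ k := by
          field_simp
  · intro hf k hk1 hkN
    have h := key k hk1 hkN
    rw [hf k hkN, hf (k - 1) (by omega)] at h
    simp only [smul_zero, add_zero, inner_zero_left, mul_zero] at h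
    linarith
end

section
/- Let θ ∈ (1/2, 1], suppose all ratios r_2, …, r_{N+1} satisfy 0 < r_k ≤ r_s (the unique positive root of (1 − 2θ)² r³ − 4θ² r² − 4θ r − 1 = 0), and assume the Poincaré-type inequality ‖x‖² ≤ C_Ω² ⟨Ax, x⟩ holds for all x ∈ H with a constant C_Ω > 0. With the discrete energies E^0 := ⟨A u^0, u^0⟩ and E^k := ((2θ − 1) r_{k+1}^{3/2}/(1 + r_{k+1})) τ_k ‖(u^k − u^{k−1})/τ_k‖² + ⟨A u^k, u^k⟩, the WSBDF2 solution is unconditionally stable in the energy norm: √(E^n) ≤ √(E^0) + 4 C_Ω (‖f^0‖ + ∑_{k=1}^n ‖f^k − f^{k−1}‖) for every 1 ≤ n ≤ N. -/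
open Finset

open scoped RealInnerProductSpace

set_option maxHeartbeats 1000000

lemma wsAux_rph (x : ℝ) (hx : 0 ≤ x) : x ^ ((3:ℝ)/2) = x * Real.sqrt x := by
  rcases eq_or_lt_of_le hx with h | h
  · rw [← h]; rw [Real.zero_rpow (by norm_num)]; simp
  · rw [show ((3:ℝ)/2) = 1 + 1/2 by norm_num, Real.rpow_add h, Real.rpow_one,
      ← Real.sqrt_eq_rpow]

lemma wsAux_F1 (θ rs : ℝ) (hθ : 1/2 < θ) (hrs : 0 < rs)
    (hroot : (1 - 2 * θ) ^ 2 * rs ^ 3 - 4 * θ ^ 2 * rs ^ 2 - 4 * θ * rs - 1 = 0) :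
    (2*θ - 1) * rs * Real.sqrt rs = 1 + 2*θ*rs := by
  have hs : Real.sqrt rs ^ 2 = rs := Real.sq_sqrt hrs.le
  have hspos : 0 < Real.sqrt rs := Real.sqrt_pos.mpr hrs
  have hprod : ((2*θ-1)*rs*Real.sqrt rs - (1+2*θ*rs)) * ((2*θ-1)*rs*Real.sqrt rs + (1+2*θ*rs)) = 0 := by
    linear_combination hroot + (2*θ-1)^2*rs^2 * hs
  have h2θ : 0 < 2*θ - 1 := by linarith
  have hpos : 0 < (2*θ-1)*rs*Real.sqrt rs + (1+2*θ*rs) := by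
    have := mul_pos (mul_pos h2θ hrs) hspos
    nlinarith
  rcases mul_eq_zero.mp hprod with h | h
  · linarith
  · linarith

lemma wsAux_F2 (θ rs : ℝ) (hθ2 : θ ≤ 1) (hrs : 0 < rs) :
    (1 + 2*θ*rs) / (1 + rs) ≤ 2 := by
  rw [div_le_iff₀ (by linarith)]
  nlinarith

lemma wsAux_F3 (θ rs r : ℝ) (hθ1 : 1/2 < θ) (hrs : 0 < rs) (hr0 : 0 < r) (hrle : r ≤ rs)
    (hF1 : (2*θ - 1) * rs * Real.sqrt rs = 1 + 2*θ*rs) :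
    (2*θ - 1) * (r * Real.sqrt r) / (1 + r) ≤ (1 + 2*θ*rs) / (1 + rs) := by
  rw [div_le_div_iff₀ (by linarith) (by linarith)]
  have hsle : Real.sqrt r ≤ Real.sqrt rs := Real.sqrt_le_sqrt hrle
  have hs0 : 0 ≤ Real.sqrt r := Real.sqrt_nonneg r
  have h2θ : (0:ℝ) ≤ 2*θ - 1 := by linarith
  have hm : r * Real.sqrt r ≤ rs * Real.sqrt rs := mul_le_mul hrle hsle hs0 hrs.le
  have h1 : (2*θ-1) * (r * Real.sqrt r) ≤ (2*θ-1) * (rs * Real.sqrt rs) :=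
    mul_le_mul_of_nonneg_left hm h2θ
  have h2 : (2*θ-1) * r * rs * Real.sqrt r ≤ (2*θ-1) * r * rs * Real.sqrt rs :=
    mul_le_mul_of_nonneg_left hsle (by positivity)
  nlinarith [h1, h2, hF1]

lemma wsAux_F4 (θ rs r : ℝ) (hθ1 : 1/2 < θ) (hθ2 : θ ≤ 1) (hrs : 0 < rs) (hr0 : 0 < r) (hrle : r ≤ rs)
    (hF1 : (2*θ - 1) * rs * Real.sqrt rs = 1 + 2*θ*rs) :
    (1 + 2*θ*rs) / (1 + rs) * (1 + r) ≤ 2 + 4*θ*r - (2*θ-1) * (r * Real.sqrt r) := by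
  have hsle : Real.sqrt r ≤ Real.sqrt rs := Real.sqrt_le_sqrt hrle
  have h2θ : (0:ℝ) ≤ 2*θ - 1 := by linarith
  have h1 : (2*θ-1) * (r * Real.sqrt r) ≤ (2*θ-1) * (r * Real.sqrt rs) :=
    mul_le_mul_of_nonneg_left (mul_le_mul_of_nonneg_left hsle hr0.le) h2θ
  have hkey : (1 + 2*θ*rs) / (1 + rs) * (1 + r) ≤ 2 + 4*θ*r - (2*θ-1) * (r * Real.sqrt rs) := by
    rw [div_mul_eq_mul_div, div_le_iff₀ (by linarith)]
    have h2 : (0:ℝ) ≤ (rs - r) * (1 + 2*rs - 2*θ*rs) := by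
      have ha : (0:ℝ) ≤ rs - r := by linarith
      have hb : (0:ℝ) ≤ 1 + 2*rs - 2*θ*rs := by nlinarith [mul_nonneg hrs.le (by linarith : (0:ℝ) ≤ 1 - θ)]
      exact mul_nonneg ha hb
    have h3 : (2*θ-1)*rs*Real.sqrt rs * (r*(1+rs)) = (1+2*θ*rs) * (r*(1+rs)) := by rw [hF1]
    nlinarith [h2, h3, hrs]
  linarith

lemma wsAux_Apart {H : Type*} [NormedAddCommGroup H] [InnerProductSpace ℝ H]
    (A : H →L[ℝ] H) (hsa : ∀ x y : H, ⟪A x, y⟫ = ⟪x, A y⟫) (hnn : ∀ x, 0 ≤ ⟪A x, x⟫)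
    (θ : ℝ) (hθ : 1/2 ≤ θ) (a b : H) :
    ⟪A a, a⟫ - ⟪A b, b⟫ ≤ 2 * ⟪A (θ • a + (1-θ) • b), a - b⟫ := by
  have hba : ⟪A b, a⟫ = ⟪A a, b⟫ := by rw [hsa b a]; exact real_inner_comm _ _
  have h1 : ⟪A (θ•a+(1-θ)•b), a - b⟫
      = θ*(⟪A a, a⟫ - ⟪A a, b⟫) + (1-θ)*(⟪A a, b⟫ - ⟪A b, b⟫) := by
    rw [map_add, map_smul, map_smul, inner_add_left, real_inner_smul_left,
      real_inner_smul_left, inner_sub_right, inner_sub_right, hba]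
  have h2 : ⟪A (a-b), a-b⟫ = ⟪A a,a⟫ - 2*⟪A a, b⟫ + ⟪A b,b⟫ := by
    rw [map_sub, inner_sub_left, inner_sub_right, inner_sub_right, hba]; ring
  have h3 := hnn (a-b)
  rw [h2] at h3
  nlinarith [mul_nonneg (by linarith : (0:ℝ) ≤ 2*θ-1) h3, h1]


/-- unconditional energy-norm stability of the WSBDF2 scheme. Under
`θ ∈ (1/2, 1]`, ratios `0 < r_k ≤ r_s` (`r_s` the unique positive root of
`(1 − 2θ)² r³ − 4θ² r² − 4θ r − 1 = 0`), and the Poincaré-type inequality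
`‖x‖² ≤ C_Ω² ⟨Ax, x⟩`, with discrete energies `E^0 = ⟨A u^0, u^0⟩` and
`E^k = ((2θ − 1) r_{k+1}^{3/2}/(1 + r_{k+1})) τ_k ‖(u^k − u^{k−1})/τ_k‖² + ⟨A u^k, u^k⟩`:
`√(E^n) ≤ √(E^0) + 4 C_Ω (‖f^0‖ + ∑_{k=1}^n ‖f^k − f^{k−1}‖)` for every `1 ≤ n ≤ N`. -/
theorem wsbdf2_energy_stability
    {H : Type*} [NormedAddCommGroup H] [InnerProductSpace ℝ H] [CompleteSpace H]
    (A : H →L[ℝ] H)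
    (hA_selfadj : ∀ x y : H, ⟪A x, y⟫ = ⟪x, A y⟫)
    (hA_nonneg : ∀ x : H, 0 ≤ ⟪A x, x⟫)
    (θ : ℝ) (hθ : 1 / 2 < θ ∧ θ ≤ 1)
    (N : ℕ) (hN : 1 ≤ N)
    (τ : ℕ → ℝ) (hτ : ∀ k, 1 ≤ k → k ≤ N + 1 → 0 < τ k)
    (rs : ℝ) (hrs_pos : 0 < rs)
    (hrs_root : (1 - 2 * θ) ^ 2 * rs ^ 3 - 4 * θ ^ 2 * rs ^ 2 - 4 * θ * rs - 1 = 0)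
    (hrs_uniq : ∀ r : ℝ, 0 < r →
      (1 - 2 * θ) ^ 2 * r ^ 3 - 4 * θ ^ 2 * r ^ 2 - 4 * θ * r - 1 = 0 → r = rs)
    (hr : ∀ k, 2 ≤ k → k ≤ N + 1 → 0 < rr τ k ∧ rr τ k ≤ rs)
    (CΩ : ℝ) (hCΩ : 0 < CΩ)
    (hPoincare : ∀ x : H, ‖x‖ ^ 2 ≤ CΩ ^ 2 * ⟪A x, x⟫)
    (u f : ℕ → H)
    (hscheme1 : (τ 1)⁻¹ • (u 1 - u 0) + A (θ • u 1 + (1 - θ) • u 0)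
      = θ • f 1 + (1 - θ) • f 0)
    (hscheme : ∀ n, 2 ≤ n → n ≤ N →
      bk θ τ n 0 • (u n - u (n - 1)) + bk θ τ n 1 • (u (n - 1) - u (n - 2)) +
        A (θ • u n + (1 - θ) • u (n - 1)) = θ • f n + (1 - θ) • f (n - 1))
    (E : ℕ → ℝ)
    (hE0 : E 0 = ⟪A (u 0), u 0⟫)
    (hEk : ∀ k, 1 ≤ k → k ≤ N →
      E k = (2 * θ - 1) * (rr τ (k + 1)) ^ ((3 : ℝ) / 2) / (1 + rr τ (k + 1)) * τ k *
          ‖(τ k)⁻¹ • (u k - u (k - 1))‖ ^ 2 + ⟪A (u k), u k⟫) :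
    ∀ n, 1 ≤ n → n ≤ N →
      Real.sqrt (E n) ≤ Real.sqrt (E 0) +
        4 * CΩ * (‖f 0‖ + ∑ k ∈ Finset.Icc 1 n, ‖f k - f (k - 1)‖) := by
  obtain ⟨hθ1, hθ2⟩ := hθ
  have h2θ : (0:ℝ) < 2*θ - 1 := by linarith
  have hF1 : (2*θ - 1) * rs * Real.sqrt rs = 1 + 2*θ*rs := wsAux_F1 θ rs hθ1 hrs_pos hrs_root
  set G : ℝ := (1 + 2*θ*rs) / (1 + rs) with hGdef
  have hG0 : 0 ≤ G := by
    apply div_nonneg _ (by linarith)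
    nlinarith
  have hG2 : G ≤ 2 := wsAux_F2 θ rs hθ2 hrs_pos
  -- abbreviations
  set v : ℕ → H := fun k => u k - u (k - 1) with hvdef
  set g : ℕ → H := fun k => θ • f k + (1 - θ) • f (k - 1) with hgdef
  set c : ℕ → ℝ := fun k => (2*θ - 1) * (rr τ (k+1) * Real.sqrt (rr τ (k+1))) / (1 + rr τ (k+1)) with hcdef
  -- ratio facts
  have hrr : ∀ k, 1 ≤ k → k ≤ N → 0 < rr τ (k+1) ∧ rr τ (k+1) ≤ rs := by
    intro k hk1 hk2
    exact hr (k+1) (by omega) (by omega)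
  have hcG : ∀ k, 1 ≤ k → k ≤ N → c k ≤ G := by
    intro k hk1 hk2
    obtain ⟨h1, h2⟩ := hrr k hk1 hk2
    exact wsAux_F3 θ rs _ hθ1 hrs_pos h1 h2 hF1
  have hc0 : ∀ k, 1 ≤ k → k ≤ N → 0 ≤ c k := by
    intro k hk1 hk2
    obtain ⟨h1, _⟩ := hrr k hk1 hk2
    have := Real.sqrt_nonneg (rr τ (k+1))
    apply div_nonneg _ (by linarith)
    positivity
  -- rewritten energy
  have hEk' : ∀ k, 1 ≤ k → k ≤ N → E k = c k / τ k * ‖v k‖^2 + ⟪A (u k), u k⟫ := by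
    intro k hk1 hk2
    rw [hEk k hk1 hk2]
    have hτk : 0 < τ k := hτ k hk1 (by omega)
    obtain ⟨h1, _⟩ := hrr k hk1 hk2
    rw [wsAux_rph _ h1.le]
    have hns : ‖(τ k)⁻¹ • (u k - u (k - 1))‖ = (τ k)⁻¹ * ‖v k‖ := by
      rw [norm_smul, Real.norm_eq_abs, abs_of_pos (inv_pos.mpr hτk)]
    rw [hns]
    simp only [hcdef]
    have h1r : (0:ℝ) < 1 + rr τ (k+1) := by positivity
    generalize rr τ (k+1) = R at h1 h1r ⊢
    generalize ‖v k‖ = X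
    generalize (⟪A (u k), u k⟫ : ℝ) = I
    field_simp
  -- energy nonneg and Poincaré bound
  have hEnn : ∀ k, k ≤ N → 0 ≤ E k := by
    intro k hk
    rcases Nat.eq_zero_or_pos k with h | h
    · rw [h, hE0]; exact hA_nonneg _
    · rw [hEk' k h hk]
      have hτk : 0 < τ k := hτ k h (by omega)
      have := hc0 k h hk
      have := hA_nonneg (u k)
      positivity
  have hinner : ∀ k, k ≤ N → ⟪A (u k), u k⟫ ≤ E k := by
    intro k hk
    rcases Nat.eq_zero_or_pos k with h | h
    · rw [h, hE0]
    · rw [hEk' k h hk]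
      have hτk : 0 < τ k := hτ k h (by omega)
      have := hc0 k h hk
      nlinarith [sq_nonneg ‖v k‖, div_nonneg (hc0 k h hk) hτk.le, sq_nonneg ‖v k‖,
        mul_nonneg (div_nonneg (hc0 k h hk) hτk.le) (sq_nonneg ‖v k‖)]
  have hu_le : ∀ k, k ≤ N → ‖u k‖ ≤ CΩ * Real.sqrt (E k) := by
    intro k hk
    have h1 : ‖u k‖^2 ≤ CΩ^2 * E k := by
      calc ‖u k‖^2 ≤ CΩ^2 * ⟪A (u k), u k⟫ := hPoincare (u k)
        _ ≤ CΩ^2 * E k := by nlinarith [hinner k hk, sq_nonneg CΩ]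
    have h2 : Real.sqrt (‖u k‖^2) ≤ Real.sqrt (CΩ^2 * E k) := Real.sqrt_le_sqrt h1
    rwa [Real.sqrt_sq (norm_nonneg _), Real.sqrt_mul (sq_nonneg CΩ), Real.sqrt_sq hCΩ.le] at h2
  -- the per-step energy inequality
  have hstep : ∀ m, 1 ≤ m → m ≤ N → E m ≤ E (m - 1) + 2 * ⟪g m, v m⟫ := by
    intro m hm1 hm2
    rcases eq_or_lt_of_le hm1 with h1 | h1
    · -- first step m = 1
      subst h1
      have hτ1 : 0 < τ 1 := hτ 1 le_rfl (by omega)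
      have hv1 : v 1 = u 1 - u 0 := rfl
      have hg1 : g 1 = θ • f 1 + (1 - θ) • f 0 := rfl
      have h0 : (τ 1)⁻¹ * ‖v 1‖^2 + ⟪A (θ • u 1 + (1 - θ) • u 0), v 1⟫ = ⟪g 1, v 1⟫ := by
        rw [← real_inner_self_eq_norm_sq, ← real_inner_smul_left, ← inner_add_left, hv1,
          hscheme1, hg1]
      have hA := wsAux_Apart A hA_selfadj hA_nonneg θ hθ1.le (u 1) (u 0)
      rw [show u 1 - u 0 = v 1 from rfl] at hA
      have hE1 : E 1 = c 1 / τ 1 * ‖v 1‖^2 + ⟪A (u 1), u 1⟫ := hEk' 1 le_rfl hN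
      have hc1 : c 1 ≤ 2 := le_trans (hcG 1 le_rfl hN) hG2
      have hc1' : 0 ≤ c 1 := hc0 1 le_rfl hN
      have hmul : c 1 / τ 1 * ‖v 1‖^2 ≤ 2 * ((τ 1)⁻¹ * ‖v 1‖^2) := by
        have h' : c 1 * (τ 1)⁻¹ ≤ 2 * (τ 1)⁻¹ :=
          mul_le_mul_of_nonneg_right hc1 (inv_nonneg.mpr hτ1.le)
        calc c 1 / τ 1 * ‖v 1‖^2 = c 1 * (τ 1)⁻¹ * ‖v 1‖^2 := by rw [div_eq_mul_inv]
          _ ≤ 2 * (τ 1)⁻¹ * ‖v 1‖^2 := mul_le_mul_of_nonneg_right h' (sq_nonneg _)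
          _ = 2 * ((τ 1)⁻¹ * ‖v 1‖^2) := by ring
      rw [show (1:ℕ) - 1 = 0 from rfl, hE0]
      linarith only [h0, hA, hE1, hmul]
    · -- general step m ≥ 2
      have hm2' : 2 ≤ m := h1
      obtain ⟨hr0, hrle⟩ := hr m hm2' (by omega)
      have hτm : 0 < τ m := hτ m (by omega) (by omega)
      have hτm1 : 0 < τ (m-1) := hτ (m-1) (by omega) (by omega)
      set r := rr τ m with hrdef
      have hτr : τ (m-1) * r = τ m := by
        rw [hrdef]; unfold rr; field_simp
      set s := Real.sqrt r with hsdef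
      have hs2 : s^2 = r := Real.sq_sqrt hr0.le
      have hspos : 0 < s := Real.sqrt_pos.mpr hr0
      have h1r : (0:ℝ) < 1 + r := by linarith
      have hb0 : bk θ τ m 0 = (1 + 2*θ*r) / (τ m * (1 + r)) := by
        unfold bk; rw [if_neg (by omega), if_pos rfl]
      have hb1 : bk θ τ m 1 = -((2*θ-1) * r^2 / (τ m * (1 + r))) := by
        unfold bk; rw [if_neg (by omega), if_neg (by norm_num), if_pos rfl]; ring
      set β : ℝ := (2*θ-1) * r^2 / (τ m * (1 + r)) with hβdef
      have hβ0 : 0 ≤ β := by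
        apply div_nonneg _ (by positivity)
        positivity
      -- index bookkeeping
      have hidx1 : m - 1 + 1 = m := by omega
      have hvm : v m = u m - u (m-1) := rfl
      have hvm1 : v (m-1) = u (m-1) - u (m-2) := by
        show u (m-1) - u (m-1-1) = _
        rw [show m-1-1 = m-2 from by omega]
      -- test the scheme with v m
      have h0 : bk θ τ m 0 * ‖v m‖^2 + bk θ τ m 1 * ⟪v (m-1), v m⟫
          + ⟪A (θ • u m + (1 - θ) • u (m-1)), v m⟫ = ⟪g m, v m⟫ := by
        rw [← real_inner_self_eq_norm_sq, ← real_inner_smul_left, ← real_inner_smul_left,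
          ← inner_add_left, ← inner_add_left, hvm, hvm1, hscheme m hm2' hm2]
      -- A part
      have hA := wsAux_Apart A hA_selfadj hA_nonneg θ hθ1.le (u m) (u (m-1))
      rw [show u m - u (m-1) = v m from rfl] at hA
      -- P2 : β * s equals the previous-energy coefficient
      have hcm1 : c (m-1) = (2*θ-1) * (r * s) / (1 + r) := by
        simp only [hcdef, hidx1, hrdef, hsdef]
      have hP2 : β * s = c (m-1) / τ (m-1) := by
        rw [hcm1, hβdef, ← hτr]
        field_simp [hτm1.ne', hr0.ne', h1r.ne']
      -- P1
      have hP1 : c m / τ m ≤ 2 * bk θ τ m 0 - β / s := by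
        have hcm : c m ≤ G := hcG m (by omega) hm2
        have hF4 := wsAux_F4 θ rs r hθ1 hθ2 hrs_pos hr0 hrle hF1
        have heq : 2 * bk θ τ m 0 - β / s = (2 + 4*θ*r - (2*θ-1)*(r*s)) / (τ m * (1+r)) := by
          rw [hb0, hβdef, ← hs2]
          have h1s : (0:ℝ) < 1 + s^2 := by positivity
          field_simp
          ring
        rw [heq]
        calc c m / τ m ≤ G / τ m := by gcongr
          _ = G * (1+r) / (τ m * (1+r)) := by
              rw [mul_comm (τ m) (1+r), ← div_div, mul_div_assoc, div_self h1r.ne', mul_one]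
          _ ≤ (2 + 4*θ*r - (2*θ-1)*(r*s)) / (τ m * (1+r)) := by gcongr
      -- scalar Young-type inequality
      have hip : ⟪v (m-1), v m⟫ ≤ ‖v (m-1)‖ * ‖v m‖ := real_inner_le_norm _ _
      have hk1' : 2*(‖v m‖*‖v (m-1)‖) ≤ ‖v m‖^2/s + s*‖v (m-1)‖^2 := by
        rw [← sub_nonneg]
        have he : ‖v m‖^2/s + s*‖v (m-1)‖^2 - 2*(‖v m‖*‖v (m-1)‖) = (‖v m‖ - s*‖v (m-1)‖)^2/s := by
          generalize ‖v m‖ = x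
          generalize ‖v (m-1)‖ = y
          field_simp
          ring
        rw [he]; positivity
      have hb1ip : -(β*(‖v (m-1)‖*‖v m‖)) ≤ bk θ τ m 1 * ⟪v (m-1), v m⟫ := by
        rw [hb1, neg_mul]
        exact neg_le_neg (mul_le_mul_of_nonneg_left hip hβ0)
      -- energies
      have hEm : E m = c m / τ m * ‖v m‖^2 + ⟪A (u m), u m⟫ := hEk' m (by omega) hm2
      have hEm1 : E (m-1) = c (m-1) / τ (m-1) * ‖v (m-1)‖^2 + ⟪A (u (m-1)), u (m-1)⟫ :=
        hEk' (m-1) (by omega) (by omega)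
      have hP1x : c m / τ m * ‖v m‖^2 ≤ (2 * bk θ τ m 0 - β / s) * ‖v m‖^2 :=
        mul_le_mul_of_nonneg_right hP1 (sq_nonneg _)
      have hk1'' : β*(2*(‖v m‖*‖v (m-1)‖)) ≤ β*(‖v m‖^2/s + s*‖v (m-1)‖^2) :=
        mul_le_mul_of_nonneg_left hk1' hβ0
      have hP2y : β*s*‖v (m-1)‖^2 = c (m-1) / τ (m-1) * ‖v (m-1)‖^2 := by rw [hP2]
      have ediv : β * (‖v m‖^2/s + s*‖v (m-1)‖^2) = β/s*‖v m‖^2 + β*s*‖v (m-1)‖^2 := by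
        ring
      linarith only [h0, hA, hP1x, hk1'', hP2y, hb1ip, hEm, hEm1, ediv]
  -- telescoped + Abel-summed inequality
  have habel : ∀ n, 1 ≤ n → n ≤ N →
      E n ≤ E 0 + 2 * ⟪g n, u n⟫ - 2 * ⟪g 1, u 0⟫
        - ∑ k ∈ Finset.Icc 2 n, 2 * ⟪g k - g (k-1), u (k-1)⟫ := by
    intro n hn1
    induction n, hn1 using Nat.le_induction with
    | base =>
      intro _
      have h := hstep 1 le_rfl hN
      have hv1 : v 1 = u 1 - u 0 := by simp [hvdef]
      have : ⟪g 1, v 1⟫ = ⟪g 1, u 1⟫ - ⟪g 1, u 0⟫ := by rw [hv1, inner_sub_right]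
      rw [show (1:ℕ) - 1 = 0 from rfl] at h
      rw [Finset.Icc_eq_empty (by omega)]
      simp only [Finset.sum_empty]
      linarith
    | succ n hn ih =>
      intro hn2
      have hih := ih (by omega)
      have h := hstep (n+1) (by omega) hn2
      have hv1 : v (n+1) = u (n+1) - u n := by simp [hvdef]
      have hx : ⟪g (n+1), v (n+1)⟫
          = ⟪g (n+1), u (n+1)⟫ - ⟪g n, u n⟫ - ⟪g (n+1) - g n, u n⟫ := by
        rw [hv1, inner_sub_right, inner_sub_left]; ring
      have hsum : ∑ k ∈ Finset.Icc 2 (n+1), 2 * ⟪g k - g (k-1), u (k-1)⟫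
          = (∑ k ∈ Finset.Icc 2 n, 2 * ⟪g k - g (k-1), u (k-1)⟫)
            + 2 * ⟪g (n+1) - g n, u n⟫ := by
        rw [Finset.sum_Icc_succ_top (by omega)]
        norm_num
      rw [show n + 1 - 1 = n from rfl] at h
      linarith
  -- bound on the g-sums by f-sums
  have hgf : ∀ n, 1 ≤ n →
      ‖g 1‖ + ∑ k ∈ Finset.Icc 2 n, ‖g k - g (k-1)‖ + (1-θ) * ‖f n - f (n-1)‖
        ≤ ‖f 0‖ + ∑ k ∈ Finset.Icc 1 n, ‖f k - f (k-1)‖ := by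
    have hθ0 : (0:ℝ) < θ := by linarith
    have hgdiff : ∀ n : ℕ, 1 ≤ n → ‖g (n+1) - g n‖
        ≤ θ * ‖f (n+1) - f n‖ + (1-θ) * ‖f n - f (n-1)‖ := by
      intro n hn
      have he : g (n+1) - g n = θ • (f (n+1) - f n) + (1-θ) • (f n - f (n-1)) := by
        show θ • f (n+1) + (1 - θ) • f (n+1-1) - (θ • f n + (1 - θ) • f (n-1)) = _
        rw [show n+1-1 = n from rfl, smul_sub, smul_sub]
        abel
      rw [he]
      refine (norm_add_le _ _).trans ?_
      rw [norm_smul, norm_smul, Real.norm_eq_abs, Real.norm_eq_abs,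
        abs_of_pos hθ0, abs_of_nonneg (by linarith : (0:ℝ) ≤ 1-θ)]
    intro n hn
    induction n, hn using Nat.le_induction with
    | base =>
      rw [Finset.Icc_eq_empty (by omega)]
      rw [show Finset.Icc 1 1 = {1} from rfl]
      simp only [Finset.sum_empty, Finset.sum_singleton]
      have hg1 : g 1 = f 0 + θ • (f 1 - f 0) := by
        show θ • f 1 + (1 - θ) • f (1-1) = _
        rw [show (1:ℕ)-1 = 0 from rfl, smul_sub, sub_smul, one_smul]
        abel
      have h1 : ‖g 1‖ ≤ ‖f 0‖ + θ * ‖f 1 - f 0‖ := by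
        rw [hg1]
        refine (norm_add_le _ _).trans ?_
        rw [norm_smul, Real.norm_eq_abs, abs_of_pos hθ0]
      rw [show (1:ℕ)-1 = 0 from rfl]
      linarith
    | succ n hn ih =>
      rw [Finset.sum_Icc_succ_top (show 2 ≤ n+1 by omega),
        Finset.sum_Icc_succ_top (show 1 ≤ n+1 by omega),
        show n+1-1 = n from rfl]
      have hd := hgdiff n hn
      linarith [ih]
  -- telescoping bound on ‖g m‖
  have hgtel : ∀ m, 1 ≤ m → ‖g m‖ ≤ ‖g 1‖ + ∑ k ∈ Finset.Icc 2 m, ‖g k - g (k-1)‖ := by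
    intro m hm
    induction m, hm using Nat.le_induction with
    | base =>
      rw [Finset.Icc_eq_empty (by omega)]
      simp
    | succ n hn ih =>
      rw [Finset.sum_Icc_succ_top (show 2 ≤ n+1 by omega), show n+1-1 = n from rfl]
      have : ‖g (n+1)‖ ≤ ‖g n‖ + ‖g (n+1) - g n‖ := by
        calc ‖g (n+1)‖ = ‖g n + (g (n+1) - g n)‖ := by congr 1; abel
          _ ≤ ‖g n‖ + ‖g (n+1) - g n‖ := norm_add_le _ _
      linarith
  -- final assembly
  intro n hn1 hn2
  have hne : (Finset.Icc 0 n).Nonempty := ⟨0, by simp⟩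
  set M := (Finset.Icc 0 n).sup' hne (fun j => Real.sqrt (E j)) with hMdef
  have hMge : ∀ j, j ≤ n → Real.sqrt (E j) ≤ M := by
    intro j hj
    exact Finset.le_sup' (fun j => Real.sqrt (E j)) (Finset.mem_Icc.mpr ⟨Nat.zero_le _, hj⟩)
  have hM0 : 0 ≤ M := le_trans (Real.sqrt_nonneg (E 0)) (hMge 0 (Nat.zero_le _))
  set S := ‖g 1‖ + ∑ k ∈ Finset.Icc 2 n, ‖g k - g (k-1)‖ with hSdef
  have hsum_nn : (0:ℝ) ≤ ∑ k ∈ Finset.Icc 2 n, ‖g k - g (k-1)‖ :=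
    Finset.sum_nonneg (fun k _ => norm_nonneg _)
  have hS0 : 0 ≤ S := add_nonneg (norm_nonneg _) hsum_nn
  have hSf : S ≤ ‖f 0‖ + ∑ k ∈ Finset.Icc 1 n, ‖f k - f (k-1)‖ := by
    have h1 := hgf n hn1
    have h2 : 0 ≤ (1-θ) * ‖f n - f (n-1)‖ :=
      mul_nonneg (by linarith) (norm_nonneg _)
    linarith
  have hfsum_nn : (0:ℝ) ≤ ‖f 0‖ + ∑ k ∈ Finset.Icc 1 n, ‖f k - f (k-1)‖ :=
    add_nonneg (norm_nonneg _) (Finset.sum_nonneg (fun k _ => norm_nonneg _))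
  -- key: M ≤ √(E 0) + 4 CΩ S
  have hkey : M ≤ Real.sqrt (E 0) + 4 * CΩ * S := by
    obtain ⟨m0, hm0mem, hm0⟩ := Finset.exists_mem_eq_sup' hne (fun j => Real.sqrt (E j))
    have hm0n : m0 ≤ n := (Finset.mem_Icc.mp hm0mem).2
    rcases Nat.eq_zero_or_pos m0 with h0 | h0
    · rw [hMdef, hm0, h0]
      nlinarith [mul_nonneg (mul_nonneg (by norm_num : (0:ℝ) ≤ 4) hCΩ.le) hS0]
    · -- 1 ≤ m0
      have hm0N : m0 ≤ N := le_trans hm0n hn2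
      have hab := habel m0 h0 hm0N
      -- bound the inner products
      have hb1 : 2 * ⟪g m0, u m0⟫ ≤ 2 * (‖g m0‖ * (CΩ * M)) := by
        have h1 : ⟪g m0, u m0⟫ ≤ ‖g m0‖ * ‖u m0‖ := real_inner_le_norm _ _
        have h2 : ‖u m0‖ ≤ CΩ * M := by
          refine (hu_le m0 hm0N).trans ?_
          have := hMge m0 hm0n
          nlinarith
        nlinarith [norm_nonneg (g m0), norm_nonneg (u m0)]
      have hb2 : -(2 * ⟪g 1, u 0⟫) ≤ 2 * (‖g 1‖ * (CΩ * M)) := by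
        have h1 : -⟪g 1, u 0⟫ ≤ ‖g 1‖ * ‖u 0‖ := by
          have := abs_real_inner_le_norm (g 1) (u 0)
          have := neg_abs_le (⟪g 1, u 0⟫ : ℝ)
          linarith
        have h2 : ‖u 0‖ ≤ CΩ * M := by
          refine (hu_le 0 (Nat.zero_le _)).trans ?_
          have := hMge 0 (Nat.zero_le _)
          nlinarith
        nlinarith [norm_nonneg (g 1), norm_nonneg (u 0)]
      have hb3 : -(∑ k ∈ Finset.Icc 2 m0, 2 * ⟪g k - g (k-1), u (k-1)⟫)
          ≤ ∑ k ∈ Finset.Icc 2 m0, 2 * (‖g k - g (k-1)‖ * (CΩ * M)) := by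
        rw [← Finset.sum_neg_distrib]
        refine Finset.sum_le_sum ?_
        intro k hk
        obtain ⟨hk2, hkm0⟩ := Finset.mem_Icc.mp hk
        have hk1N : k - 1 ≤ N := by omega
        have h1 : -⟪g k - g (k-1), u (k-1)⟫ ≤ ‖g k - g (k-1)‖ * ‖u (k-1)‖ := by
          have := abs_real_inner_le_norm (g k - g (k-1)) (u (k-1))
          have := neg_abs_le (⟪g k - g (k-1), u (k-1)⟫ : ℝ)
          linarith
        have h2 : ‖u (k-1)‖ ≤ CΩ * M := by
          refine (hu_le (k-1) hk1N).trans ?_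
          have := hMge (k-1) (by omega)
          nlinarith
        nlinarith [norm_nonneg (g k - g (k-1)), norm_nonneg (u (k-1))]
      have hsum_factor : ∑ k ∈ Finset.Icc 2 m0, 2 * (‖g k - g (k-1)‖ * (CΩ * M))
          = 2 * CΩ * M * ∑ k ∈ Finset.Icc 2 m0, ‖g k - g (k-1)‖ := by
        rw [Finset.mul_sum]
        refine Finset.sum_congr rfl ?_
        intro k _
        ring
      have hsub : ∑ k ∈ Finset.Icc 2 m0, ‖g k - g (k-1)‖
          ≤ ∑ k ∈ Finset.Icc 2 n, ‖g k - g (k-1)‖ := by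
        refine Finset.sum_le_sum_of_subset_of_nonneg ?_ (fun k _ _ => norm_nonneg _)
        exact Finset.Icc_subset_Icc_right hm0n
      have hgm0 : ‖g m0‖ ≤ S := by
        refine (hgtel m0 h0).trans ?_
        rw [hSdef]
        linarith [hsub]
      have hEm0 : E m0 ≤ E 0 + 2 * CΩ * M * (2 * S) := by
        have hCM : 0 ≤ CΩ * M := mul_nonneg hCΩ.le hM0
        have t1 : 2 * (CΩ * M) * ‖g m0‖ ≤ 2 * (CΩ * M) * S :=
          mul_le_mul_of_nonneg_left hgm0 (by linarith)
        have t2 : 2 * (CΩ * M) * (‖g 1‖ + ∑ k ∈ Finset.Icc 2 m0, ‖g k - g (k-1)‖)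
            ≤ 2 * (CΩ * M) * S := by
          refine mul_le_mul_of_nonneg_left ?_ (by linarith)
          rw [hSdef]
          linarith [hsub]
        have t1' : 2 * (‖g m0‖ * (CΩ * M)) = 2 * (CΩ * M) * ‖g m0‖ := by ring
        have t2' : 2 * (‖g 1‖ * (CΩ * M)) = 2 * (CΩ * M) * ‖g 1‖ := by ring
        linarith only [hab, hb1, hb2, hb3, hsum_factor, t1, t2, t1', t2']
      -- quadratic argument
      have hMeq : M^2 = E m0 := by
        rw [hMdef, hm0, Real.sq_sqrt (hEnn m0 hm0N)]
      have hE0M : E 0 ≤ Real.sqrt (E 0) * M := by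
        have h1 : Real.sqrt (E 0) ≤ M := hMge 0 (Nat.zero_le _)
        calc E 0 = Real.sqrt (E 0) * Real.sqrt (E 0) :=
              (Real.mul_self_sqrt (hEnn 0 (Nat.zero_le _))).symm
          _ ≤ Real.sqrt (E 0) * M := mul_le_mul_of_nonneg_left h1 (Real.sqrt_nonneg _)
      have hM2 : M^2 ≤ (Real.sqrt (E 0) + 4 * CΩ * S) * M := by
        rw [hMeq]
        linarith only [hEm0, hE0M]
      rcases eq_or_lt_of_le hM0 with hM0' | hM0'
      · rw [← hM0']
        have h1 : 0 ≤ 4 * CΩ * S := by positivity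
        have h2 := Real.sqrt_nonneg (E 0)
        linarith only [h1, h2]
      · refine le_of_mul_le_mul_right ?_ hM0'
        calc M * M = M^2 := (sq M).symm
          _ ≤ (Real.sqrt (E 0) + 4 * CΩ * S) * M := hM2
  have hfin : Real.sqrt (E n) ≤ M := hMge n le_rfl
  have h4 : 4 * CΩ * S ≤ 4 * CΩ * (‖f 0‖ + ∑ k ∈ Finset.Icc 1 n, ‖f k - f (k-1)‖) := by
    have : (0:ℝ) ≤ 4 * CΩ := by linarith
    nlinarith [hSf]
  linarith
end
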